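/- arXiv:1602.08458 — 4 statements merged into one kernel-verified Lean document; each statement's English description precedes it below -/
import Mathlib

section
/- Let F(s) = 1 + 2·4^{−s} and G(s) = 1 + 3·9^{−s}. Then F and G are entire functions of order 1, the functions F − 1 and G − 1 have no zeros in ℂ, F and G satisfy the functional equations 2^s F(s) = 2^{1−s}·conj(F(1 − conj(s))) and 3^s G(s) = 3^{1−s}·conj(G(1 − conj(s))) for all s ∈ ℂ, and yet F ≢ G. -/
open Complex Filter

/-- `f` grows at most like `exp(|s|^ρ)`. The order of an entire function is the infimum
of the `ρ` for which this holds. -/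
def GrowthOrderLE (f : ℂ → ℂ) (ρ : ℝ) : Prop :=
  ∃ C : ℝ, ∀ s : ℂ, ‖f s‖ ≤ C * Real.exp (‖s‖ ^ ρ)

/-- `F(s) = 1 + 2·4^{-s}`. -/
noncomputable def Fex : ℂ → ℂ := fun s => 1 + 2 * Complex.exp (-s * (Real.log 4 : ℂ))

/-- `G(s) = 1 + 3·9^{-s}`. -/
noncomputable def Gex : ℂ → ℂ := fun s => 1 + 3 * Complex.exp (-s * (Real.log 9 : ℂ))

lemma growth_aux {L ρ : ℝ} (hL : 0 ≤ L) (hρ : 1 < ρ) :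
    ∃ K : ℝ, 0 ≤ K ∧ ∀ x : ℝ, 0 ≤ x → L * x ≤ K + x ^ ρ := by
  set R : ℝ := max 1 (L ^ (1/(ρ-1))) with hRdef
  have hR1 : (1:ℝ) ≤ R := le_max_left _ _
  refine ⟨L * R, by positivity, fun x hx => ?_⟩
  rcases le_total x R with h | h
  · have h1 : L * x ≤ L * R := mul_le_mul_of_nonneg_left h hL
    have h0 : (0:ℝ) ≤ x ^ ρ := Real.rpow_nonneg hx _
    linarith
  · have hx1 : (1:ℝ) ≤ x := le_trans hR1 h
    have hxpos : (0:ℝ) < x := lt_of_lt_of_le one_pos hx1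
    have key : L ≤ x ^ (ρ - 1) := by
      have h1 : L ^ (1/(ρ-1)) ≤ x := le_trans (le_max_right _ _) h
      have h2 : (L ^ (1/(ρ-1))) ^ (ρ-1) ≤ x ^ (ρ-1) :=
        Real.rpow_le_rpow (Real.rpow_nonneg hL _) h1 (by linarith)
      have h3 : (L ^ (1/(ρ-1))) ^ (ρ-1) = L := by
        rw [← Real.rpow_mul hL, one_div, inv_mul_cancel₀ (by linarith : ρ - 1 ≠ 0),
          Real.rpow_one]
      linarith [h3 ▸ h2]
    have h4 : x ^ ((ρ-1)+1) = x ^ (ρ-1) * x := Real.rpow_add_one hxpos.ne' _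
    rw [show ρ-1+1 = ρ by ring] at h4
    nlinarith [Real.rpow_nonneg hx ρ, mul_le_mul_of_nonneg_right key hx]

lemma growthLE {c L : ℝ} (hc : 0 ≤ c) (hL : 0 ≤ L) {ρ : ℝ} (hρ : 1 < ρ) :
    GrowthOrderLE (fun s => 1 + (c:ℂ) * Complex.exp (-s * (L:ℂ))) ρ := by
  obtain ⟨K, hK0, hK⟩ := growth_aux hL hρ
  refine ⟨(1 + c) * Real.exp K, fun s => ?_⟩
  have h1 : ‖Complex.exp (-s * (L:ℂ))‖ = Real.exp (-s.re * L) := by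
    rw [Complex.norm_exp]
    congr 1
    simp
  have h2 : -s.re * L ≤ ‖s‖ * L :=
    mul_le_mul_of_nonneg_right (le_trans (neg_le_abs _) (Complex.abs_re_le_norm s)) hL
  have h3 : ‖1 + (c:ℂ) * Complex.exp (-s * (L:ℂ))‖
      ≤ 1 + c * Real.exp (‖s‖ * L) := by
    calc ‖1 + (c:ℂ) * Complex.exp (-s * (L:ℂ))‖
        ≤ ‖(1:ℂ)‖ + ‖(c:ℂ) * Complex.exp (-s * (L:ℂ))‖ :=
          norm_add_le _ _
      _ = 1 + c * Real.exp (-s.re * L) := by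
          rw [norm_one, norm_mul, h1, Complex.norm_real, Real.norm_of_nonneg hc]
      _ ≤ 1 + c * Real.exp (‖s‖ * L) := by
          have := Real.exp_le_exp.mpr h2
          nlinarith
  have h4 : L * ‖s‖ ≤ K + ‖s‖ ^ ρ := hK _ (norm_nonneg s)
  have h5 : Real.exp (‖s‖ * L) ≤ Real.exp K * Real.exp (‖s‖ ^ ρ) := by
    rw [← Real.exp_add]
    apply Real.exp_le_exp.mpr
    linarith
  have h6 : (1:ℝ) ≤ Real.exp (‖s‖ * L) := by
    rw [Real.one_le_exp_iff]
    positivity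
  nlinarith [Real.exp_pos K, Real.exp_pos (‖s‖ ^ ρ)]

lemma not_growthLE {c L : ℝ} (hc : 1 ≤ c) (hL : 1 < L) {ρ : ℝ} (hρ : ρ < 1) :
    ¬ GrowthOrderLE (fun s => 1 + (c:ℂ) * Complex.exp (-s * (L:ℂ))) ρ := by
  rintro ⟨C, hC⟩
  set x : ℝ := max 1 (C / (L - 1)) with hxdef
  have hx1 : (1:ℝ) ≤ x := le_max_left _ _
  have hx0 : (0:ℝ) ≤ x := by linarith
  have hL1 : (0:ℝ) < L - 1 := by linarith
  have hxC : C ≤ (L - 1) * x := by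
    have h := le_max_right 1 (C / (L - 1))
    rw [div_le_iff₀ hL1] at h
    linarith [h]
  have hval := hC (-(x:ℂ))
  simp only [neg_neg] at hval
  have harg : ((x:ℂ) * (L:ℂ)) = ((x * L : ℝ) : ℂ) := by push_cast; ring
  rw [harg, ← Complex.ofReal_exp] at hval
  have hval2 : (1:ℝ) + c * Real.exp (x * L) ≤ C * Real.exp (‖-(x:ℂ)‖ ^ ρ) := by
    have : ((1:ℂ) + (c:ℂ) * ((Real.exp (x*L) : ℝ) : ℂ)) = (((1 + c * Real.exp (x*L) : ℝ)) : ℂ) := by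
      push_cast; ring
    rw [this, Complex.norm_real, Real.norm_eq_abs] at hval
    have hpos : (0:ℝ) ≤ 1 + c * Real.exp (x*L) := by positivity
    rwa [_root_.abs_of_nonneg hpos] at hval
  have habsx : ‖-(x:ℂ)‖ = x := by
    rw [norm_neg, Complex.norm_real, Real.norm_of_nonneg hx0]
  rw [habsx] at hval2
  have hxρ : x ^ ρ ≤ x := by
    have := Real.rpow_le_rpow_of_exponent_le hx1 (le_of_lt hρ)
    rwa [Real.rpow_one] at this
  have hCpos : 0 < C := by
    nlinarith [Real.exp_pos (x * L), Real.exp_pos (x ^ ρ)]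
  have h7 : C * Real.exp (x ^ ρ) ≤ C * Real.exp x :=
    mul_le_mul_of_nonneg_left (Real.exp_le_exp.mpr hxρ) hCpos.le
  have e1 : Real.exp (x * L) = Real.exp ((L-1)*x) * Real.exp x := by
    rw [← Real.exp_add]; ring_nf
  have e2 : (L-1)*x + 1 ≤ Real.exp ((L-1)*x) := Real.add_one_le_exp _
  nlinarith [Real.exp_pos x, Real.exp_pos ((L-1)*x),
    mul_le_mul_of_nonneg_right e2 (Real.exp_pos x).le,
    mul_le_mul_of_nonneg_right hxC (Real.exp_pos x).le,
    mul_nonneg (mul_nonneg (by linarith : (0:ℝ) ≤ c - 1) (Real.exp_pos ((L-1)*x)).le)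
      (Real.exp_pos x).le]

lemma funEqAux {b : ℝ} (hb : 0 < b) (s : ℂ) :
    Complex.exp (s * (Real.log b : ℂ)) * (1 + (b:ℂ) * Complex.exp (-s * (Real.log (b^2) : ℂ))) =
    Complex.exp ((1 - s) * (Real.log b : ℂ)) *
      (starRingEnd ℂ) (1 + (b:ℂ) * Complex.exp (-(1 - (starRingEnd ℂ) s) * (Real.log (b^2) : ℂ))) := by
  have hexp : Complex.exp ((Real.log b : ℂ)) = (b:ℂ) := by
    rw [← Complex.ofReal_exp, Real.exp_log hb]
  have hconj : (starRingEnd ℂ) (1 + (b:ℂ) * Complex.exp (-(1 - (starRingEnd ℂ) s) * (Real.log (b^2) : ℂ)))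
      = 1 + (b:ℂ) * Complex.exp (-(1 - s) * (Real.log (b^2) : ℂ)) := by
    have hconjarg : (starRingEnd ℂ) (-(1 - (starRingEnd ℂ) s) * (Real.log (b^2) : ℂ))
        = -(1 - s) * (Real.log (b^2) : ℂ) := by
      rw [map_mul, map_neg, map_sub, map_one, Complex.conj_conj, Complex.conj_ofReal]
    rw [map_add, map_one, map_mul, ← Complex.exp_conj, hconjarg, Complex.conj_ofReal]
  have hlog : (Real.log (b^2) : ℂ) = 2 * (Real.log b : ℂ) := by
    rw [Real.log_pow]; push_cast; ring
  rw [hconj, hlog]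
  have ha := Complex.exp_ne_zero (s * (Real.log b : ℂ))
  have hb' : (b:ℂ) ≠ 0 := by exact_mod_cast hb.ne'
  rw [show -s * (2 * (Real.log b : ℂ)) = -(s * (Real.log b : ℂ)) + -(s * (Real.log b : ℂ)) by ring,
    show (1 - s) * (Real.log b : ℂ) = (Real.log b : ℂ) + -(s * (Real.log b : ℂ)) by ring,
    show -(1 - s) * (2 * (Real.log b : ℂ)) =
      s * (Real.log b : ℂ) + (s * (Real.log b : ℂ) + (-(Real.log b : ℂ) + -(Real.log b : ℂ))) by ring]
  simp only [Complex.exp_add, Complex.exp_neg, hexp]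
  field_simp
  ring

lemma one_lt_log_four : (1:ℝ) < Real.log 4 := by
  rw [show (1:ℝ) = Real.log (Real.exp 1) by rw [Real.log_exp]]
  apply Real.log_lt_log (Real.exp_pos 1)
  linarith [Real.exp_one_lt_d9]

lemma one_lt_log_nine : (1:ℝ) < Real.log 9 := by
  rw [show (1:ℝ) = Real.log (Real.exp 1) by rw [Real.log_exp]]
  apply Real.log_lt_log (Real.exp_pos 1)
  linarith [Real.exp_one_lt_d9]

/-- `F(s) = 1 + 2·4^{-s}` and `G(s) = 1 + 3·9^{-s}` are entire of order `1`, share the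
value `1` trivially (`F - 1` and `G - 1` have no zeros), satisfy the functional equations
`2^s F(s) = 2^{1-s} conj(F(1 - conj s))` and `3^s G(s) = 3^{1-s} conj(G(1 - conj s))`,
and yet `F ≢ G`. -/
theorem stmt11 :
    Differentiable ℂ Fex ∧ Differentiable ℂ Gex ∧
    (∀ ρ : ℝ, 1 < ρ → GrowthOrderLE Fex ρ) ∧ (∀ ρ : ℝ, ρ < 1 → ¬ GrowthOrderLE Fex ρ) ∧
    (∀ ρ : ℝ, 1 < ρ → GrowthOrderLE Gex ρ) ∧ (∀ ρ : ℝ, ρ < 1 → ¬ GrowthOrderLE Gex ρ) ∧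
    (∀ s : ℂ, Fex s - 1 ≠ 0) ∧ (∀ s : ℂ, Gex s - 1 ≠ 0) ∧
    (∀ s : ℂ, Complex.exp (s * (Real.log 2 : ℂ)) * Fex s =
      Complex.exp ((1 - s) * (Real.log 2 : ℂ)) *
        (starRingEnd ℂ) (Fex (1 - (starRingEnd ℂ) s))) ∧
    (∀ s : ℂ, Complex.exp (s * (Real.log 3 : ℂ)) * Gex s =
      Complex.exp ((1 - s) * (Real.log 3 : ℂ)) *
        (starRingEnd ℂ) (Gex (1 - (starRingEnd ℂ) s))) ∧
    Fex ≠ Gex := by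
  have hL4 : (0:ℝ) ≤ Real.log 4 := le_of_lt (lt_trans one_pos one_lt_log_four)
  have hL9 : (0:ℝ) ≤ Real.log 9 := le_of_lt (lt_trans one_pos one_lt_log_nine)
  have hFeq : Fex = fun s => 1 + ((2:ℝ):ℂ) * Complex.exp (-s * ((Real.log 4 : ℝ):ℂ)) := by
    funext s; norm_num [Fex]
  have hGeq : Gex = fun s => 1 + ((3:ℝ):ℂ) * Complex.exp (-s * ((Real.log 9 : ℝ):ℂ)) := by
    funext s; norm_num [Gex]
  refine ⟨?_, ?_, ?_, ?_, ?_, ?_, ?_, ?_, ?_, ?_, ?_⟩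
  · unfold Fex; fun_prop
  · unfold Gex; fun_prop
  · intro ρ hρ
    rw [hFeq]
    exact growthLE (show (0:ℝ) ≤ 2 by norm_num) hL4 hρ
  · intro ρ hρ h
    rw [hFeq] at h
    exact not_growthLE (show (1:ℝ) ≤ 2 by norm_num) one_lt_log_four hρ h
  · intro ρ hρ
    rw [hGeq]
    exact growthLE (show (0:ℝ) ≤ 3 by norm_num) hL9 hρ
  · intro ρ hρ h
    rw [hGeq] at h
    exact not_growthLE (show (1:ℝ) ≤ 3 by norm_num) one_lt_log_nine hρ h
  · intro s
    simp only [Fex]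
    have := Complex.exp_ne_zero (-s * (Real.log 4 : ℂ))
    intro h
    apply this
    have : (2:ℂ) * Complex.exp (-s * (Real.log 4 : ℂ)) = 0 := by linear_combination h
    simpa using this
  · intro s
    simp only [Gex]
    have := Complex.exp_ne_zero (-s * (Real.log 9 : ℂ))
    intro h
    apply this
    have : (3:ℂ) * Complex.exp (-s * (Real.log 9 : ℂ)) = 0 := by linear_combination h
    simpa using this
  · intro s
    simpa [Fex, show (4:ℝ) = 2^2 by norm_num] using funEqAux (show (0:ℝ) < 2 by norm_num) s
  · intro s
    simpa [Gex, show (9:ℝ) = 3^2 by norm_num] using funEqAux (show (0:ℝ) < 3 by norm_num) s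
  · intro h
    have h0 := congrFun h 0
    simp [Fex, Gex] at h0
end

section
/- Let (wₙ) be a sequence of nonzero complex numbers such that Σₙ |wₙ|^{−2} converges, and let n(t) denote the number of indices k with |w_k| ≤ t. Then the infinite product Π(s) = ∏ₙ₌₁^∞ (1 − s/wₙ) e^{s/wₙ} defines an entire function whose zeros are exactly the wₙ, and for every s ∈ ℂ one has log|Π(s)| ≤ 4(2 + log 2)·( |s| ∫₀^{|s|} n(t)/t² dt + |s|² ∫_{|s|}^∞ n(t)/t³ dt ). -/
open Complex Filter MeasureTheory

lemma aux_log_bound {z : ℂ} (hz : ‖z‖ ≤ 1/2) :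
    ‖Complex.log (1 - z) + z‖ ≤ ‖z‖ ^ 2 := by
  have h1 : ‖(-z : ℂ)‖ < 1 := by
    rw [norm_neg]; linarith
  have := Complex.norm_log_one_add_sub_self_le h1
  rw [show (1 : ℂ) + -z = 1 - z by ring, sub_neg_eq_add, norm_neg] at this
  refine this.trans ?_
  have h0 : (0:ℝ) ≤ ‖z‖ := norm_nonneg z
  have h2 : (1 - ‖z‖)⁻¹ ≤ 2 := by
    rw [inv_le_comm₀ (by linarith) (by norm_num)]
    linarith
  nlinarith



lemma aux_ne {z : ℂ} (hz : ‖z‖ < 1) : (1 : ℂ) - z ≠ 0 := by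
  intro h
  have h2 : ‖(1:ℂ) - z‖ = 0 := by rw [h]; simp
  have h3 : ‖(1:ℂ)‖ - ‖z‖ ≤ ‖(1:ℂ) - z‖ := norm_sub_norm_le 1 z
  simp only [norm_one, h2] at h3
  linarith

lemma aux_log_eq {z : ℂ} (hz : ‖z‖ ≤ 1/2) :
    Complex.log ((1 - z) * Complex.exp z) = Complex.log (1 - z) + z := by
  have h1 : (1 : ℂ) - z ≠ 0 := aux_ne (by linarith)
  have hre : 0 ≤ (1 - z).re := by
    have h := (abs_le.1 ((Complex.abs_re_le_norm z).trans hz)).2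
    simp only [Complex.sub_re, Complex.one_re]
    linarith
  have harg := abs_le.1 (Complex.abs_arg_le_pi_div_two_iff.2 hre)
  have him := abs_le.1 ((Complex.abs_im_le_norm z).trans hz)
  have hπ : (3:ℝ) < Real.pi := Real.pi_gt_three
  have hIm : (Complex.log (1 - z) + z).im = Complex.arg (1 - z) + z.im := by
    simp [Complex.log_im]
  conv_lhs => rw [← Complex.exp_log h1, ← Complex.exp_add]
  rw [Complex.log_exp (by rw [hIm]; linarith) (by rw [hIm]; linarith)]


lemma aux_fin (w : ℕ → ℂ) (hsum : Summable fun n => (‖w n‖)⁻¹ ^ 2)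
    (hw : ∀ n, w n ≠ 0) (c : ℝ) : {k : ℕ | ‖w k‖ ≤ c}.Finite := by
  set d := max c 1 with hd
  have hd1 : (1:ℝ) ≤ d := le_max_right c 1
  have hεpos : (0:ℝ) < (d⁻¹) ^ 2 := by positivity
  have h0 : Filter.Tendsto (fun n => (‖w n‖)⁻¹ ^ 2) Filter.cofinite (nhds 0) :=
    hsum.tendsto_cofinite_zero
  have ev : ∀ᶠ k in Filter.cofinite, (‖w k‖)⁻¹ ^ 2 < d⁻¹ ^ 2 :=
    h0.eventually_lt_const hεpos
  refine Set.Finite.subset (Filter.eventually_cofinite.mp ev) ?_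
  intro k hk
  simp only [Set.mem_setOf_eq, not_lt] at *
  have hwk : 0 < ‖w k‖ := norm_pos_iff.mpr (hw k)
  have h1 : ‖w k‖ ≤ d := hk.trans (le_max_left c 1)
  have h2 : d⁻¹ ≤ (‖w k‖)⁻¹ := by
    apply inv_anti₀ hwk h1
  gcongr

lemma aux_z_half {s : ℂ} {v : ℂ} (hv : v ≠ 0) (h : 2 * ‖s‖ ≤ ‖v‖) :
    ‖s / v‖ ≤ 1 / 2 := by
  have hvp : 0 < ‖v‖ := norm_pos_iff.mpr hv
  rw [norm_div, div_le_iff₀ hvp]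
  linarith

lemma aux_sum_log (w : ℕ → ℂ) (hw : ∀ n, w n ≠ 0)
    (hsum : Summable fun n => (‖w n‖)⁻¹ ^ 2) (s : ℂ) :
    Summable fun n => Complex.log ((1 - s / w n) * Complex.exp (s / w n)) := by
  apply Summable.of_norm_bounded_eventually
    (g := fun n => ‖s‖ ^ 2 * (‖w n‖)⁻¹ ^ 2) (hsum.mul_left _)
  rw [Filter.eventually_cofinite]
  refine Set.Finite.subset (aux_fin w hsum hw (2 * ‖s‖)) ?_
  intro k hk
  simp only [Set.mem_setOf_eq, not_le] at *
  by_contra hle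
  push_neg at hle
  have hhalf : ‖s / w k‖ ≤ 1 / 2 := aux_z_half (hw k) (le_of_lt hle)
  have hb : ‖Complex.log ((1 - s / w k) * Complex.exp (s / w k))‖ ≤
      ‖s‖ ^ 2 * (‖w k‖)⁻¹ ^ 2 := by
    rw [aux_log_eq hhalf]
    refine (aux_log_bound hhalf).trans ?_
    rw [norm_div, div_pow, div_eq_mul_inv, inv_pow]
  exact absurd hk (not_lt.2 hb)
lemma aux_fac_ne (w : ℕ → ℂ) (hw : ∀ n, w n ≠ 0) {s : ℂ} (hs : ∀ n, s ≠ w n) (n : ℕ) :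
    (1 - s / w n) * Complex.exp (s / w n) ≠ 0 := by
  apply mul_ne_zero _ (Complex.exp_ne_zero _)
  intro h
  have : s / w n = 1 := by linear_combination -h
  exact hs n ((div_eq_one_iff_eq (hw n)).1 this)

lemma aux_hasprod_zero (w : ℕ → ℂ) (hw : ∀ n, w n ≠ 0) {s : ℂ} {m : ℕ} (hm : s = w m) :
    HasProd (fun n => (1 - s / w n) * Complex.exp (s / w n)) 0 := by
  have hfm : (1 - s / w m) * Complex.exp (s / w m) = 0 := by
    rw [hm, div_self (hw m)]; ring
  have hev : ∀ᶠ S in Filter.atTop (α := Finset ℕ),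
      (0:ℂ) = ∏ i ∈ S, (1 - s / w i) * Complex.exp (s / w i) := by
    rw [Filter.eventually_atTop]
    exact ⟨{m}, fun S hS => (Finset.prod_eq_zero (hS (Finset.mem_singleton_self m)) hfm).symm⟩
  exact tendsto_const_nhds.congr' hev

lemma aux_mult (w : ℕ → ℂ) (hw : ∀ n, w n ≠ 0)
    (hsum : Summable fun n => (‖w n‖)⁻¹ ^ 2) {s : ℂ} (hs : ∀ n, s ≠ w n) :
    Multipliable fun n => (1 - s / w n) * Complex.exp (s / w n) :=
  Complex.multipliable_of_summable_log (aux_sum_log w hw hsum s)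

lemma aux_tprod_eq (w : ℕ → ℂ) (hw : ∀ n, w n ≠ 0)
    (hsum : Summable fun n => (‖w n‖)⁻¹ ^ 2) {s : ℂ} (hs : ∀ n, s ≠ w n) :
    (∏' n, (1 - s / w n) * Complex.exp (s / w n)) =
      Complex.exp (∑' n, Complex.log ((1 - s / w n) * Complex.exp (s / w n))) :=
  (Complex.cexp_tsum_eq_tprod (fun n => aux_fac_ne w hw hs n) (aux_sum_log w hw hsum s)).symm
lemma aux_diff (w : ℕ → ℂ) (hw : ∀ n, w n ≠ 0)
    (hsum : Summable fun n => (‖w n‖)⁻¹ ^ 2) :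
    Differentiable ℂ (fun s : ℂ => ∏' n, (1 - s / w n) * Complex.exp (s / w n)) := by
  intro s₀
  set R : ℝ := ‖s₀‖ + 1 with hR
  have hRpos : 0 < R := by positivity
  set S : Set ℕ := {n | ‖w n‖ ≤ 8 * R} with hSdef
  have hS : S.Finite := aux_fin w hsum hw _
  haveI := hS.fintype
  set U : Set ℂ := Metric.ball (0:ℂ) (2*R) with hU
  have hUopen : IsOpen U := Metric.isOpen_ball
  have hs₀U : s₀ ∈ U := by
    rw [hU, Metric.mem_ball, Complex.dist_eq, sub_zero, hR]
    linarith [norm_nonneg s₀]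
  -- basic facts for s ∈ U, n ∈ Sᶜ
  have hmem : ∀ n : ↥(Sᶜ), 8 * R < ‖w (n:ℕ)‖ := by
    intro n
    have h := n.2
    simpa only [hSdef, Set.mem_compl_iff, Set.mem_setOf_eq, not_le] using h
  have key : ∀ s ∈ U, ∀ n : ↥(Sᶜ), ‖s / w (n:ℕ)‖ ≤ 1/2 ∧
      ‖s / w (n:ℕ)‖ ^ 2 ≤ (2*R)^2 * (‖w (n:ℕ)‖)⁻¹ ^ 2 := by
    intro s hs n
    have hn := hmem n
    have hsu : ‖s‖ < 2 * R := by
      have := hs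
      rw [hU, Metric.mem_ball, Complex.dist_eq, sub_zero] at this
      exact this
    have h12 : ‖s / w (n:ℕ)‖ ≤ 1/2 :=
      aux_z_half (hw _) (by linarith)
    refine ⟨h12, ?_⟩
    rw [norm_div, div_pow, div_eq_mul_inv, ← inv_pow]
    have h1 : ‖s‖ ^ 2 ≤ (2*R)^2 := by nlinarith [norm_nonneg s]
    have h2 : (0:ℝ) ≤ ((‖w (n:ℕ)‖)⁻¹)^2 := by positivity
    exact mul_le_mul_of_nonneg_right h1 h2
  set G : ℂ → ℂ := fun s => ∑' n : ↥(Sᶜ), (Complex.log (1 - s / w (n:ℕ)) + s / w (n:ℕ)) with hG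
  have hGdiff : DifferentiableOn ℂ G U := by
    apply differentiableOn_tsum_of_summable_norm
      (u := fun n : ↥(Sᶜ) => (2*R)^2 * (‖w (n:ℕ)‖)⁻¹ ^ 2)
      ((hsum.mul_left ((2*R)^2)).subtype _)
    · intro n
      intro s hs
      have hk := key s hs n
      apply DifferentiableAt.differentiableWithinAt
      have hd1 : DifferentiableAt ℂ (fun s : ℂ => s / w (n:ℕ)) s :=
        differentiableAt_id.div_const _
      refine DifferentiableAt.add ?_ hd1
      refine DifferentiableAt.clog ((differentiableAt_const 1).sub hd1) ?_
      refine Complex.mem_slitPlane_iff.2 (Or.inl ?_)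
      have := (Complex.abs_re_le_norm (s / w (n:ℕ))).trans hk.1
      have hre := abs_le.1 ((Complex.abs_re_le_norm (s / w (n:ℕ))).trans hk.1)
      simp only [Complex.sub_re, Complex.one_re]
      linarith [hre.2]
    · exact hUopen
    · intro n s hs
      have hk := key s hs n
      refine (aux_log_bound hk.1).trans ?_
      exact le_trans (by norm_num) hk.2
  set P : ℂ → ℂ := fun s => (∏' n : ↥S, (1 - s / w (n:ℕ)) * Complex.exp (s / w (n:ℕ)))
      * Complex.exp (G s) with hP
  have hPdiff : DifferentiableOn ℂ P U := by
    apply DifferentiableOn.mul _ hGdiff.cexp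
    have hfin : ∀ s : ℂ, (∏' n : ↥S, (1 - s / w (n:ℕ)) * Complex.exp (s / w (n:ℕ)))
        = ∏ n : ↥S, (1 - s / w (n:ℕ)) * Complex.exp (s / w (n:ℕ)) := fun s => tprod_fintype _
    simp only [hfin]
    apply Differentiable.differentiableOn
    apply Differentiable.fun_finsetProd
    intro i _
    exact ((differentiable_const 1).sub (differentiable_id.div_const _)).mul
      ((differentiable_id.div_const _).cexp)
  have hEq : Set.EqOn (fun s : ℂ => ∏' n, (1 - s / w n) * Complex.exp (s / w n)) P U := by
    intro s hs
    have hne : ∀ n : ↥(Sᶜ), (1 - s / w (n:ℕ)) * Complex.exp (s / w (n:ℕ)) ≠ 0 := by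
      intro n
      have hk := key s hs n
      exact mul_ne_zero (aux_ne (lt_of_le_of_lt hk.1 (by norm_num))) (Complex.exp_ne_zero _)
    have hsl : Summable fun n : ↥(Sᶜ) =>
        Complex.log ((1 - s / w (n:ℕ)) * Complex.exp (s / w (n:ℕ))) := by
      apply Summable.of_norm_bounded (g := fun n : ↥(Sᶜ) => (2*R)^2 * (‖w (n:ℕ)‖)⁻¹ ^ 2)
        ((hsum.mul_left ((2*R)^2)).subtype _)
      intro n
      have hk := key s hs n
      rw [aux_log_eq hk.1]
      exact (aux_log_bound hk.1).trans (le_trans (by norm_num) hk.2)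
    have mS : Multipliable fun n : ↥S => (1 - s / w (n:ℕ)) * Complex.exp (s / w (n:ℕ)) :=
      ⟨_, hasProd_fintype _⟩
    have mSc : Multipliable fun n : ↥(Sᶜ) => (1 - s / w (n:ℕ)) * Complex.exp (s / w (n:ℕ)) :=
      Complex.multipliable_of_summable_log hsl
    have hsplit := Multipliable.tprod_mul_tprod_compl (f := fun n => (1 - s / w n) * Complex.exp (s / w n))
      (s := S) mS mSc
    have htail : (∏' n : ↥(Sᶜ), (1 - s / w (n:ℕ)) * Complex.exp (s / w (n:ℕ)))
        = Complex.exp (G s) := by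
      have h : Complex.exp (∑' n : ↥(Sᶜ),
            Complex.log ((1 - s / w (n:ℕ)) * Complex.exp (s / w (n:ℕ)))) =
          ∏' n : ↥(Sᶜ), (1 - s / w (n:ℕ)) * Complex.exp (s / w (n:ℕ)) :=
        Complex.cexp_tsum_eq_tprod (fun n => hne n) hsl
      rw [← h]
      congr 1
      apply tsum_congr
      intro n
      exact aux_log_eq (key s hs n).1
    simp only [hP]
    rw [← htail]
    exact hsplit.symm
  exact (hPdiff.differentiableAt (hUopen.mem_nhds hs₀U)).congr_of_eventuallyEq
    (Filter.eventuallyEq_of_mem (hUopen.mem_nhds hs₀U) hEq)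
lemma aux_log_abs_bound (z : ℂ) :
    Real.log (‖(1 - z) * Complex.exp z‖) ≤
      (4 + 2 * Real.log 2) * min (‖z‖) (‖z‖ ^ 2) := by
  have hlog2 : 0 ≤ Real.log 2 := Real.log_nonneg (by norm_num)
  have ha : 0 ≤ ‖z‖ := norm_nonneg z
  have hmin : 0 ≤ min (‖z‖) (‖z‖ ^ 2) := le_min ha (by positivity)
  by_cases hz1 : z = 1
  · rw [hz1]
    norm_num
    positivity
  · have hne : (1:ℂ) - z ≠ 0 := sub_ne_zero.2 (Ne.symm hz1)
    have hpos : 0 < ‖1 - z‖ := norm_pos_iff.mpr hne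
    have habs : Real.log (‖(1 - z) * Complex.exp z‖) =
        Real.log (‖1 - z‖) + z.re := by
      rw [norm_mul, Complex.norm_exp, Real.log_mul (ne_of_gt hpos) (Real.exp_ne_zero _),
        Real.log_exp]
    rw [habs]
    rcases le_or_gt (‖z‖) (1/2) with h12 | h12
    · have hb := aux_log_bound h12
      have h1 : Real.log (‖1 - z‖) + z.re = (Complex.log (1 - z) + z).re := by
        rw [Complex.add_re, Complex.log_re]
      have h2 : (Complex.log (1 - z) + z).re ≤ ‖Complex.log (1 - z) + z‖ :=
        Complex.re_le_norm _
      have hminr : min (‖z‖) (‖z‖ ^ 2) = ‖z‖ ^ 2 :=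
        min_eq_right (by nlinarith)
      rw [h1, hminr]
      nlinarith [hb, h2, sq_nonneg (‖z‖)]
    · have hub : Real.log (‖1 - z‖) ≤ Real.log (1 + ‖z‖) := by
        apply Real.log_le_log hpos
        calc ‖1 - z‖ ≤ ‖1‖ + ‖z‖ := norm_sub_le 1 z
        _ = 1 + ‖z‖ := by rw [norm_one]
      have hre : z.re ≤ ‖z‖ := Complex.re_le_norm z
      rcases le_or_gt (‖z‖) 1 with h1 | h1
      · have hlog : Real.log (1 + ‖z‖) ≤ ‖z‖ := by
          have := Real.log_le_sub_one_of_pos (show (0:ℝ) < 1 + ‖z‖ by linarith)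
          linarith
        have hminr : min (‖z‖) (‖z‖ ^ 2) = ‖z‖ ^ 2 :=
          min_eq_right (by nlinarith)
        rw [hminr]
        nlinarith
      · have hminr : min (‖z‖) (‖z‖ ^ 2) = ‖z‖ :=
          min_eq_left (by nlinarith)
        have hlog : Real.log (1 + ‖z‖) ≤ Real.log 2 + (‖z‖ - 1) := by
          calc Real.log (1 + ‖z‖) ≤ Real.log (2 * ‖z‖) := by
                apply Real.log_le_log (by linarith)
                linarith
          _ = Real.log 2 + Real.log (‖z‖) := by
                rw [Real.log_mul (by norm_num) (by linarith)]
          _ ≤ Real.log 2 + (‖z‖ - 1) := by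
                have := Real.log_le_sub_one_of_pos (show (0:ℝ) < ‖z‖ by linarith)
                linarith
        rw [hminr]
        nlinarith
lemma aux_ae_ne (m : ℝ) : ∀ᵐ t : ℝ, t ≠ m := by
  rw [MeasureTheory.ae_iff]
  have h : {t : ℝ | ¬ t ≠ m} = {m} := by ext t; simp
  rw [h]
  exact Real.volume_singleton

lemma aux_indicator_pieces {m r : ℝ} (hm : 0 < m) (hmr : m ≤ r) :
    IntervalIntegrable (fun t : ℝ => if m ≤ t then (t ^ 2)⁻¹ else 0) volume 0 m ∧
    IntervalIntegrable (fun t : ℝ => if m ≤ t then (t ^ 2)⁻¹ else 0) volume m r := by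
  classical
  have hcont : ContinuousOn (fun t : ℝ => (t ^ 2)⁻¹) (Set.uIcc m r) := by
    apply ContinuousOn.inv₀ ((continuous_pow 2).continuousOn)
    intro t ht
    rw [Set.uIcc_of_le hmr] at ht
    exact pow_ne_zero 2 (ne_of_gt (lt_of_lt_of_le hm ht.1))
  have hI2 : IntervalIntegrable (fun t : ℝ => if m ≤ t then (t ^ 2)⁻¹ else 0) volume m r := by
    rw [intervalIntegrable_iff]
    refine (intervalIntegrable_iff.1 hcont.intervalIntegrable).congr_fun ?_ measurableSet_uIoc
    intro t ht
    rw [Set.uIoc_of_le hmr] at ht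
    exact (if_pos ht.1.le).symm
  have hI1 : IntervalIntegrable (fun t : ℝ => if m ≤ t then (t ^ 2)⁻¹ else 0) volume 0 m := by
    rw [intervalIntegrable_iff, Set.uIoc_of_le hm.le]
    apply MeasureTheory.Integrable.congr (MeasureTheory.integrable_zero _ _ _)
    filter_upwards [MeasureTheory.ae_restrict_mem measurableSet_Ioc,
      MeasureTheory.ae_restrict_of_ae (aux_ae_ne m)] with t htmem htne
    exact (if_neg (not_le.2 (lt_of_le_of_ne htmem.2 htne))).symm
  exact ⟨hI1, hI2⟩

lemma aux_indicator_int {m r : ℝ} (hm : 0 < m) (hmr : m ≤ r) :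
    (∫ t in (0:ℝ)..r, (if m ≤ t then (t ^ 2)⁻¹ else 0)) = m⁻¹ - r⁻¹ := by
  classical
  obtain ⟨hI1, hI2⟩ := aux_indicator_pieces hm hmr
  rw [← intervalIntegral.integral_add_adjacent_intervals hI1 hI2]
  have h1 : (∫ t in (0:ℝ)..m, (if m ≤ t then (t ^ 2)⁻¹ else 0)) = 0 := by
    rw [intervalIntegral.integral_congr_ae (g := fun _ => (0:ℝ)) ?_, intervalIntegral.integral_zero]
    filter_upwards [aux_ae_ne m] with t htne htmem
    rw [Set.uIoc_of_le hm.le] at htmem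
    exact if_neg (not_le.2 (lt_of_le_of_ne htmem.2 htne))
  have h2 : (∫ t in m..r, (if m ≤ t then (t ^ 2)⁻¹ else 0)) = m⁻¹ - r⁻¹ := by
    have heq : Set.EqOn (fun t : ℝ => if m ≤ t then (t ^ 2)⁻¹ else 0)
        (fun t : ℝ => t ^ (-2 : ℤ)) (Set.uIcc m r) := by
      intro t ht
      rw [Set.uIcc_of_le hmr] at ht
      simp only [if_pos ht.1, zpow_neg]
      norm_cast
    rw [intervalIntegral.integral_congr heq, integral_zpow (Or.inr ⟨by norm_num, ?_⟩)]
    · norm_num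
      ring
    · rw [Set.uIcc_of_le hmr]
      intro h
      exact absurd h.1 (not_le.2 hm)
  rw [h1, h2, zero_add]
lemma aux_intA (w : ℕ → ℂ) (hw : ∀ n, w n ≠ 0)
    (hsum : Summable fun n => (‖w n‖)⁻¹ ^ 2)
    (cnt : ℝ → ℝ) (hcnt : ∀ t : ℝ, cnt t = (Set.ncard {k : ℕ | ‖w k‖ ≤ t} : ℝ))
    {r : ℝ} (hr : 0 < r) :
    r * ∫ t in (0:ℝ)..r, cnt t / t ^ 2 =
      ∑' n, (if ‖w n‖ ≤ r then r / ‖w n‖ - 1 else 0) := by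
  classical
  set F : Finset ℕ := (aux_fin w hsum hw r).toFinset with hF
  have hmemF : ∀ k, k ∈ F ↔ ‖w k‖ ≤ r := by
    intro k
    rw [hF, Set.Finite.mem_toFinset, Set.mem_setOf_eq]
  have hEqOn : Set.EqOn (fun t => cnt t / t ^ 2)
      (fun t => ∑ k ∈ F, (if ‖w k‖ ≤ t then (t ^ 2)⁻¹ else 0))
      (Set.uIcc (0:ℝ) r) := by
    intro t ht
    rw [Set.uIcc_of_le hr.le] at ht
    have hcard : cnt t = ((aux_fin w hsum hw t).toFinset.card : ℝ) := by
      rw [hcnt t, Set.ncard_eq_toFinset_card _ (aux_fin w hsum hw t)]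
    have hfilter : F.filter (fun k => ‖w k‖ ≤ t) =
        (aux_fin w hsum hw t).toFinset := by
      ext k
      simp only [Finset.mem_filter, hmemF k, Set.Finite.mem_toFinset, Set.mem_setOf_eq]
      exact ⟨fun h => h.2, fun h => ⟨h.trans ht.2, h⟩⟩
    have hsum' : (∑ k ∈ F, (if ‖w k‖ ≤ t then (t ^ 2)⁻¹ else 0)) =
        ((F.filter (fun k => ‖w k‖ ≤ t)).card : ℝ) * (t ^ 2)⁻¹ := by
      rw [← Finset.sum_filter, Finset.sum_const, nsmul_eq_mul]
    simp only
    rw [hsum', hfilter, hcard, div_eq_mul_inv]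
  rw [intervalIntegral.integral_congr hEqOn]
  have hint : ∀ k ∈ F, IntervalIntegrable
      (fun t : ℝ => if ‖w k‖ ≤ t then (t ^ 2)⁻¹ else 0) volume 0 r := by
    intro k hk
    have hm : 0 < ‖w k‖ := norm_pos_iff.mpr (hw k)
    have hmr : ‖w k‖ ≤ r := (hmemF k).1 hk
    obtain ⟨hI1, hI2⟩ := aux_indicator_pieces hm hmr
    exact hI1.trans hI2
  rw [intervalIntegral.integral_finset_sum hint, Finset.mul_sum]
  rw [tsum_eq_sum (s := F) (fun k hk => if_neg (fun hc => hk ((hmemF k).2 hc)))]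
  apply Finset.sum_congr rfl
  intro k hk
  have hm : 0 < ‖w k‖ := norm_pos_iff.mpr (hw k)
  have hmr : ‖w k‖ ≤ r := (hmemF k).1 hk
  rw [aux_indicator_int hm hmr, if_pos hmr]
  field_simp
lemma aux_cube_int {c : ℝ} (hc : 0 < c) :
    MeasureTheory.IntegrableOn (fun t : ℝ => (t ^ 3)⁻¹) (Set.Ioi c) ∧
    (∫ t in Set.Ioi c, (t ^ 3)⁻¹) = (c ^ 2)⁻¹ / 2 := by
  have heq : Set.EqOn (fun t : ℝ => t ^ (-3:ℝ)) (fun t : ℝ => (t ^ 3)⁻¹) (Set.Ioi c) := by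
    intro t ht
    have htpos : 0 < t := hc.trans ht
    simp only
    rw [show (-3:ℝ) = -((3:ℕ):ℝ) by norm_num, Real.rpow_neg htpos.le, Real.rpow_natCast]
  constructor
  · exact (integrableOn_Ioi_rpow_of_lt (by norm_num) hc).congr_fun heq measurableSet_Ioi
  · rw [← MeasureTheory.setIntegral_congr_fun measurableSet_Ioi heq,
      integral_Ioi_rpow_of_lt (by norm_num) hc]
    rw [show (-3:ℝ) + 1 = -((2:ℕ):ℝ) by norm_num, Real.rpow_neg hc.le, Real.rpow_natCast]
    ring

lemma aux_intB (w : ℕ → ℂ) (hw : ∀ n, w n ≠ 0)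
    (hsum : Summable fun n => (‖w n‖)⁻¹ ^ 2)
    (cnt : ℝ → ℝ) (hcnt : ∀ t : ℝ, cnt t = (Set.ncard {k : ℕ | ‖w k‖ ≤ t} : ℝ))
    {r : ℝ} (hr : 0 < r) :
    (∫ t in Set.Ioi r, cnt t / t ^ 3) =
      ∑' k, ((max r (‖w k‖)) ^ 2)⁻¹ / 2 := by
  classical
  set g : ℕ → ℝ → ℝ := fun k t => if ‖w k‖ ≤ t then (t ^ 3)⁻¹ else 0 with hg
  have hgnn : ∀ k t, t ∈ Set.Ioi r → 0 ≤ g k t := by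
    intro k t ht
    have h0 : (0:ℝ) < t := hr.trans ht
    simp only [hg]
    split <;> positivity
  have hgnn' : ∀ k, 0 ≤ᵐ[volume.restrict (Set.Ioi r)] g k := by
    intro k
    filter_upwards [MeasureTheory.ae_restrict_mem measurableSet_Ioi] with t ht
    exact hgnn k t ht
  have hmeas : ∀ k, MeasureTheory.AEStronglyMeasurable (g k) (volume.restrict (Set.Ioi r)) := by
    intro k
    exact (Measurable.ite measurableSet_Ici ((measurable_id.pow_const 3).inv)
      measurable_const).aestronglyMeasurable
  have hindic : ∀ k, g k = Set.indicator (Set.Ici (‖w k‖))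
      (fun t : ℝ => (t ^ 3)⁻¹) := by
    intro k
    funext t
    simp [hg, Set.indicator_apply, Set.mem_Ici]
  have hcm : ∀ k, (0:ℝ) < max r (‖w k‖) := fun k => lt_max_of_lt_left hr
  have hOn : ∀ k, MeasureTheory.IntegrableOn (fun t : ℝ => (t ^ 3)⁻¹)
      (Set.Ici (‖w k‖)) (volume.restrict (Set.Ioi r)) := by
    intro k
    rw [MeasureTheory.IntegrableOn, MeasureTheory.Measure.restrict_restrict measurableSet_Ici]
    refine ((integrableOn_Ici_iff_integrableOn_Ioi (f := fun t : ℝ => (t ^ 3)⁻¹)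
      (b := max r (‖w k‖)) (μ := volume)).2
      (aux_cube_int (hcm k)).1).mono_set ?_
    rintro t ⟨h1, h2⟩
    exact max_le h2.le (Set.mem_Ici.mp h1)
  have hgi : ∀ k, MeasureTheory.IntegrableOn (g k) (Set.Ioi r) := by
    intro k
    rw [hindic k]
    exact (hOn k).integrable_indicator measurableSet_Ici
  have hgval : ∀ k, (∫ t in Set.Ioi r, g k t) =
      ((max r (‖w k‖)) ^ 2)⁻¹ / 2 := by
    intro k
    set m := ‖w k‖ with hm
    have hmpos : 0 < m := norm_pos_iff.mpr (hw k)
    rw [hindic k, MeasureTheory.integral_indicator measurableSet_Ici,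
      MeasureTheory.Measure.restrict_restrict measurableSet_Ici]
    rcases le_or_gt m r with h | h
    · have hinter : Set.Ici m ∩ Set.Ioi r = Set.Ioi r := by
        ext t
        simp only [Set.mem_inter_iff, Set.mem_Ici, Set.mem_Ioi, and_iff_right_iff_imp]
        intro ht
        linarith
      rw [hinter, max_eq_left h]
      exact (aux_cube_int hr).2
    · have hinter : Set.Ici m ∩ Set.Ioi r = Set.Ici m := by
        ext t
        simp only [Set.mem_inter_iff, Set.mem_Ici, Set.mem_Ioi, and_iff_left_iff_imp]
        intro ht
        linarith
      rw [hinter, max_eq_right h.le, MeasureTheory.integral_Ici_eq_integral_Ioi]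
      exact (aux_cube_int hmpos).2
  have hcsum : Summable (fun k => ((max r (‖w k‖)) ^ 2)⁻¹ / 2) := by
    apply Summable.div_const
    apply Summable.of_nonneg_of_le (fun k => by positivity) _ hsum
    intro k
    have hmpos : 0 < ‖w k‖ := norm_pos_iff.mpr (hw k)
    rw [← inv_pow]
    exact pow_le_pow_left₀ (inv_nonneg.2 (hcm k).le) (inv_anti₀ hmpos (le_max_right _ _)) 2
  have hlint : ∀ k, (∫⁻ t, ‖g k t‖₊ ∂(volume.restrict (Set.Ioi r))) =
      ENNReal.ofReal (((max r (‖w k‖)) ^ 2)⁻¹ / 2) := by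
    intro k
    have h1 : (∫⁻ t, ‖g k t‖₊ ∂(volume.restrict (Set.Ioi r))) =
        ∫⁻ t, ENNReal.ofReal (g k t) ∂(volume.restrict (Set.Ioi r)) := by
      apply MeasureTheory.lintegral_congr_ae
      filter_upwards [MeasureTheory.ae_restrict_mem measurableSet_Ioi] with t ht
      exact Real.enorm_eq_ofReal (hgnn k t ht)
    rw [h1, ← MeasureTheory.ofReal_integral_eq_lintegral_ofReal (hgi k) (hgnn' k), hgval k]
  have hne : (∑' k, ∫⁻ t, ‖g k t‖₊ ∂(volume.restrict (Set.Ioi r))) ≠ ⊤ := by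
    simp_rw [hlint]
    rw [← ENNReal.ofReal_tsum_of_nonneg (fun k => by positivity) hcsum]
    exact ENNReal.ofReal_ne_top
  have hpt : Set.EqOn (fun t => cnt t / t ^ 3) (fun t => ∑' k, g k t) (Set.Ioi r) := by
    intro t ht
    have h0 : (0:ℝ) < t := hr.trans ht
    have hfin := aux_fin w hsum hw t
    simp only
    rw [tsum_eq_sum (s := hfin.toFinset) (fun k hk => by
      rw [hg]
      simp only
      rw [if_neg]
      intro hc
      exact hk (hfin.mem_toFinset.2 hc))]
    have : ∀ k ∈ hfin.toFinset, g k t = (t ^ 3)⁻¹ := by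
      intro k hk
      rw [hg]
      simp only
      rw [if_pos (show ‖w k‖ ≤ t from hfin.mem_toFinset.1 hk)]
    rw [Finset.sum_congr rfl this, Finset.sum_const, nsmul_eq_mul, hcnt t,
      Set.ncard_eq_toFinset_card _ hfin, div_eq_mul_inv]
  calc (∫ t in Set.Ioi r, cnt t / t ^ 3)
      = ∫ t in Set.Ioi r, (∑' k, g k t) :=
        MeasureTheory.setIntegral_congr_fun measurableSet_Ioi hpt
    _ = ∑' k, ∫ t in Set.Ioi r, g k t := MeasureTheory.integral_tsum hmeas hne
    _ = ∑' k, ((max r (‖w k‖)) ^ 2)⁻¹ / 2 := tsum_congr hgval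
lemma aux_max_summable (w : ℕ → ℂ) (hw : ∀ n, w n ≠ 0)
    (hsum : Summable fun n => (‖w n‖)⁻¹ ^ 2) (r : ℝ) (hr : 0 < r) :
    Summable (fun k => ((max r (‖w k‖)) ^ 2)⁻¹ / 2) := by
  apply Summable.div_const
  apply Summable.of_nonneg_of_le (fun k => by positivity) _ hsum
  intro k
  have hmpos : 0 < ‖w k‖ := norm_pos_iff.mpr (hw k)
  rw [← inv_pow]
  exact pow_le_pow_left₀ (inv_nonneg.2 (lt_max_of_lt_left hr).le)
    (inv_anti₀ hmpos (le_max_right _ _)) 2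

lemma aux_part4 (w : ℕ → ℂ) (hw : ∀ n, w n ≠ 0)
    (hsum : Summable fun n => (‖w n‖)⁻¹ ^ 2)
    (cnt : ℝ → ℝ) (hcnt : ∀ t : ℝ, cnt t = (Set.ncard {k : ℕ | ‖w k‖ ≤ t} : ℝ))
    (s : ℂ) :
    Real.log (‖∏' n, (1 - s / w n) * Complex.exp (s / w n)‖) ≤
      4 * (2 + Real.log 2) *
        ((‖s‖) * (∫ t in (0:ℝ)..(‖s‖), cnt t / t ^ 2) +
          (‖s‖) ^ 2 * ∫ t in Set.Ioi ((‖s‖ : ℝ)), cnt t / t ^ 3) := by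
  classical
  have hlog2 : 0 ≤ Real.log 2 := Real.log_nonneg (by norm_num)
  have hcntnn : ∀ t, 0 ≤ cnt t := fun t => by rw [hcnt]; positivity
  have hInt1nn : 0 ≤ ∫ t in (0:ℝ)..(‖s‖), cnt t / t ^ 2 := by
    apply intervalIntegral.integral_nonneg (norm_nonneg s)
    intro t _
    exact div_nonneg (hcntnn t) (by positivity)
  have hInt2nn : 0 ≤ ∫ t in Set.Ioi ((‖s‖ : ℝ)), cnt t / t ^ 3 := by
    apply MeasureTheory.setIntegral_nonneg measurableSet_Ioi
    intro t ht
    have h0 : (0:ℝ) < t := lt_of_le_of_lt (norm_nonneg s) ht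
    exact div_nonneg (hcntnn t) (by positivity)
  have hRHSnn : 0 ≤ 4 * (2 + Real.log 2) *
      ((‖s‖) * (∫ t in (0:ℝ)..(‖s‖), cnt t / t ^ 2) +
        (‖s‖) ^ 2 * ∫ t in Set.Ioi ((‖s‖ : ℝ)), cnt t / t ^ 3) := by
    apply mul_nonneg (by linarith)
    exact add_nonneg (mul_nonneg (norm_nonneg s) hInt1nn)
      (mul_nonneg (sq_nonneg _) hInt2nn)
  by_cases hzero : ∃ m, s = w m
  · obtain ⟨m, hm⟩ := hzero
    rw [(aux_hasprod_zero w hw hm).tprod_eq, norm_zero, Real.log_zero]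
    exact hRHSnn
  push_neg at hzero
  by_cases hs0 : s = 0
  · subst hs0
    have h1 : (fun n : ℕ => (1 - 0 / w n) * Complex.exp (0 / w n)) = fun _ => (1:ℂ) := by
      funext n
      simp
    rw [h1, tprod_one, norm_one, Real.log_one]
    exact hRHSnn
  set r : ℝ := ‖s‖ with hrdef
  have hr : 0 < r := norm_pos_iff.mpr hs0
  have hlog_sum := aux_sum_log w hw hsum s
  have hre_sum : Summable (fun n => (Complex.log ((1 - s / w n) * Complex.exp (s / w n))).re) :=
    (Complex.hasSum_re hlog_sum.hasSum).summable
  have hLHS : Real.log (‖∏' n, (1 - s / w n) * Complex.exp (s / w n)‖) =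
      ∑' n, Real.log (‖(1 - s / w n) * Complex.exp (s / w n)‖) := by
    rw [aux_tprod_eq w hw hsum hzero, Complex.norm_exp, Real.log_exp,
      Complex.re_tsum hlog_sum]
    exact tsum_congr fun n => Complex.log_re _
  have hre_sum' : Summable (fun n =>
      Real.log (‖(1 - s / w n) * Complex.exp (s / w n)‖)) := by
    refine hre_sum.congr fun n => Complex.log_re _
  -- the min quantities
  set q : ℕ → ℝ := fun n => min (‖s / w n‖) (‖s / w n‖ ^ 2) with hq
  have habsdiv : ∀ n, ‖s / w n‖ = r / ‖w n‖ := fun n => norm_div _ _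
  have habssq : ∀ n, ‖s / w n‖ ^ 2 = r ^ 2 * ((‖w n‖) ^ 2)⁻¹ := by
    intro n
    rw [habsdiv n, div_pow, div_eq_mul_inv]
  have hqsum : Summable q := by
    have hg : Summable (fun n => r ^ 2 * ((‖w n‖) ^ 2)⁻¹) := by
      refine (hsum.mul_left (r ^ 2)).congr fun n => ?_
      rw [inv_pow]
    apply Summable.of_nonneg_of_le
      (fun n => le_min (norm_nonneg _) (sq_nonneg _)) (fun n => ?_) hg
    rw [← habssq n]
    exact min_le_right _ _
  -- termwise bound
  have hterm : ∀ n, Real.log (‖(1 - s / w n) * Complex.exp (s / w n)‖) ≤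
      (4 + 2 * Real.log 2) * q n := fun n => aux_log_abs_bound (s / w n)
  have hle1 : (∑' n, Real.log (‖(1 - s / w n) * Complex.exp (s / w n)‖)) ≤
      ∑' n, (4 + 2 * Real.log 2) * q n :=
    Summable.tsum_le_tsum hterm hre_sum' (hqsum.mul_left _)
  -- decompose q
  set a : ℕ → ℝ := fun n => if ‖w n‖ ≤ r then r / ‖w n‖ - 1 else 0
    with ha
  set b : ℕ → ℝ := fun n => 2 * r ^ 2 * (((max r (‖w n‖)) ^ 2)⁻¹ / 2) with hb
  have hsplitq : ∀ n, q n = a n + b n := by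
    intro n
    have hmpos : 0 < ‖w n‖ := norm_pos_iff.mpr (hw n)
    rcases le_or_gt (‖w n‖) r with h | h
    · have hx1 : 1 ≤ r / ‖w n‖ := (one_le_div hmpos).2 h
      have hminx : q n = r / ‖w n‖ := by
        rw [hq]
        simp only
        rw [habsdiv n]
        exact min_eq_left (by nlinarith)
      rw [hminx, ha, hb]
      simp only [if_pos h, max_eq_left h]
      field_simp
      ring
    · have hx1 : ‖s / w n‖ < 1 := by
        rw [habsdiv n]
        exact (div_lt_one hmpos).2 h
      have hminx : q n = ‖s / w n‖ ^ 2 := by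
        rw [hq]
        exact min_eq_right (by nlinarith [norm_nonneg (s / w n)])
      rw [hminx, ha, hb]
      simp only [if_neg (not_le.2 h), max_eq_right h.le]
      rw [habssq n]
      ring
  have hasum : Summable a := by
    apply summable_of_ne_finset_zero (s := (aux_fin w hsum hw r).toFinset)
    intro k hk
    rw [ha]
    simp only
    rw [if_neg]
    intro hc
    exact hk ((aux_fin w hsum hw r).mem_toFinset.2 hc)
  have hbsum : Summable b := (aux_max_summable w hw hsum r hr).mul_left _
  have htsa : (∑' n, a n) = r * ∫ t in (0:ℝ)..r, cnt t / t ^ 2 :=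
    (aux_intA w hw hsum cnt hcnt hr).symm
  have htsb : (∑' n, b n) = 2 * (r ^ 2 * ∫ t in Set.Ioi r, cnt t / t ^ 3) := by
    rw [hb, tsum_mul_left, ← aux_intB w hw hsum cnt hcnt hr]
    ring
  have hqval : (∑' n, q n) = r * (∫ t in (0:ℝ)..r, cnt t / t ^ 2) +
      2 * (r ^ 2 * ∫ t in Set.Ioi r, cnt t / t ^ 3) := by
    rw [tsum_congr hsplitq, Summable.tsum_add hasum hbsum, htsa, htsb]
  rw [hLHS]
  refine hle1.trans ?_
  rw [tsum_mul_left, hqval]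
  have hAi : 0 ≤ r * ∫ t in (0:ℝ)..r, cnt t / t ^ 2 := mul_nonneg hr.le hInt1nn
  have hBi : 0 ≤ r ^ 2 * ∫ t in Set.Ioi r, cnt t / t ^ 3 := mul_nonneg (by positivity) hInt2nn
  nlinarith [hAi, hBi, hlog2]
/-- The Weierstrass-type product `Π(s) = ∏ₙ (1 - s/wₙ) e^{s/wₙ}` over a sequence `wₙ` of
nonzero complex numbers with `Σ |wₙ|⁻² < ∞` converges, defines an entire function whose
zeros are exactly the `wₙ`, and satisfies
`log|Π(s)| ≤ 4(2 + log 2)(|s| ∫₀^{|s|} n(t)/t² dt + |s|² ∫_{|s|}^∞ n(t)/t³ dt)`,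
where `n(t) = #{k : |w_k| ≤ t}` (counted with multiplicity). -/
theorem stmt12 (w : ℕ → ℂ) (hw : ∀ n, w n ≠ 0)
    (hsum : Summable fun n => ‖w n‖⁻¹ ^ 2)
    (cnt : ℝ → ℝ) (hcnt : ∀ t : ℝ, cnt t = (Set.ncard {k : ℕ | ‖w k‖ ≤ t} : ℝ)) :
    (∀ s : ℂ, Multipliable fun n => (1 - s / w n) * Complex.exp (s / w n)) ∧
    Differentiable ℂ (fun s : ℂ => ∏' n, (1 - s / w n) * Complex.exp (s / w n)) ∧
    (∀ s : ℂ, (∏' n, (1 - s / w n) * Complex.exp (s / w n)) = 0 ↔ ∃ n, s = w n) ∧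
    (∀ s : ℂ, Real.log ‖∏' n, (1 - s / w n) * Complex.exp (s / w n)‖ ≤
      4 * (2 + Real.log 2) *
        (‖s‖ * (∫ t in (0:ℝ)..‖s‖, cnt t / t ^ 2) +
          ‖s‖ ^ 2 * ∫ t in Set.Ioi ((‖s‖ : ℝ)), cnt t / t ^ 3)) := by
  refine ⟨?_, aux_diff w hw hsum, ?_, fun s => aux_part4 w hw hsum cnt hcnt s⟩
  · intro s
    by_cases h : ∃ m, s = w m
    · obtain ⟨m, hm⟩ := h
      exact ⟨0, aux_hasprod_zero w hw hm⟩
    · push_neg at h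
      exact aux_mult w hw hsum h
  · intro s
    constructor
    · intro h
      by_contra hc
      push_neg at hc
      rw [aux_tprod_eq w hw hsum hc] at h
      exact Complex.exp_ne_zero _ h
    · rintro ⟨m, hm⟩
      exact (aux_hasprod_zero w hw hm).tprod_eq
end

section
/- Let f be meromorphic on ℂ, analytic and nonconstant on a strip b < Re(s) < c (b, c possibly ±∞), and uniformly almost periodic in the sense of Bohr on that strip. Suppose the equation f(s) = a has a solution in the strip. Then there exists a constant c₀ > 0 such that N(r,a;f) ≥ c₀·r for all sufficiently large r. -/
open Complex Filter MeasureTheory Classical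

/-- The order of `f` at `z` as an integer: positive for zeros, negative for poles,
`0` if `f` is not meromorphic at `z` or the order is infinite. -/

noncomputable def merOrd (f : ℂ → ℂ) (z : ℂ) : ℤ :=
  if h : MeromorphicAt f z then (meromorphicOrderAt f z).untopD 0 else 0

/-- `n(r, a; f)`: number of solutions of `f s = a` in `|s| ≤ r`, counted with multiplicity. -/
noncomputable def countZeros (f : ℂ → ℂ) (a : ℂ) (r : ℝ) : ℝ :=
  ∑ᶠ z ∈ Metric.closedBall (0 : ℂ) r, (((merOrd (fun s => f s - a) z).toNat : ℝ))

/-- `n(r, ∞; f)`: number of poles of `f` in `|s| ≤ r`, counted with multiplicity. -/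
noncomputable def countPoles (f : ℂ → ℂ) (r : ℝ) : ℝ :=
  ∑ᶠ z ∈ Metric.closedBall (0 : ℂ) r, (((-(merOrd f z)).toNat : ℝ))

/-- The integrated counting function `N(r, a; f)`. -/
noncomputable def Ncount (f : ℂ → ℂ) (a : ℂ) (r : ℝ) : ℝ :=
  (∫ t in (0:ℝ)..r, (countZeros f a t - countZeros f a 0) / t) +
    countZeros f a 0 * Real.log r

/-- The integrated counting function `N(r, ∞; f)` of the poles. -/
noncomputable def NcountPoles (f : ℂ → ℂ) (r : ℝ) : ℝ :=
  (∫ t in (0:ℝ)..r, (countPoles f t - countPoles f 0) / t) +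
    countPoles f 0 * Real.log r

/-- The Nevanlinna proximity function `m(r, f)`. -/
noncomputable def proximity (f : ℂ → ℂ) (r : ℝ) : ℝ :=
  (2 * Real.pi)⁻¹ *
    ∫ θ in (0:ℝ)..(2 * Real.pi), Real.log (max (‖f ((r : ℂ) * Complex.exp ((θ : ℂ) * Complex.I))‖) 1)

/-- The Nevanlinna characteristic `T(r, f) = m(r, f) + N(r, ∞; f)`. -/
noncomputable def Tchar (f : ℂ → ℂ) (r : ℝ) : ℝ := proximity f r + NcountPoles f r

/-- `f` has finite order: `T(r, f) = O(r ^ ρ)` for some `ρ < ∞`. -/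
def FiniteOrder (f : ℂ → ℂ) : Prop :=
  ∃ ρ : ℝ, (fun r : ℝ => Tchar f r) =O[atTop] fun r : ℝ => r ^ ρ

/-- `f` has order `< σ`: `T(r, f) = O(r ^ ρ)` for some `ρ < σ`. -/
def OrderLT (f : ℂ → ℂ) (σ : ℝ) : Prop :=
  ∃ ρ : ℝ, ρ < σ ∧ (fun r : ℝ => Tchar f r) =O[atTop] fun r : ℝ => r ^ ρ

/-- `f` is uniformly almost periodic (in the sense of Bohr) on a set `S ⊆ ℂ`: for every
`ε > 0` the set of `ω ∈ ℝ` with `|f(s + iω) - f(s)| < ε` on `S` is relatively dense. -/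
def UnifAlmostPeriodicOn (f : ℂ → ℂ) (S : Set ℂ) : Prop :=
  ∀ ε : ℝ, 0 < ε → ∃ L : ℝ, 0 < L ∧ ∀ x : ℝ, ∃ ω ∈ Set.Icc x (x + L),
    ∀ s ∈ S, ‖f (s + (ω : ℂ) * Complex.I) - f s‖ < ε

section helpers
open Topology

private lemma merOrd_eq {g : ℂ → ℂ} {z : ℂ} (hm : MeromorphicAt g z) :
    merOrd g z = (meromorphicOrderAt g z).untopD 0 := by
  rw [merOrd, dif_pos hm]

private lemma eventually_ne_of_order_ne_top {g : ℂ → ℂ} {z : ℂ} (hm : MeromorphicAt g z)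
    (h : meromorphicOrderAt g z ≠ ⊤) : ∀ᶠ w in 𝓝[≠] z, g w ≠ 0 := by
  obtain ⟨n, hn⟩ := WithTop.ne_top_iff_exists.mp h
  obtain ⟨φ, hφa, hφz, hev⟩ := (meromorphicOrderAt_eq_int_iff hm).mp hn.symm
  have hφne : ∀ᶠ w in 𝓝 z, φ w ≠ 0 := hφa.continuousAt.eventually_ne hφz
  filter_upwards [hev, hφne.filter_mono nhdsWithin_le_nhds, self_mem_nhdsWithin] with w h1 h2 h3
  rw [h1, smul_eq_mul]
  exact mul_ne_zero (zpow_ne_zero n (sub_ne_zero.mpr h3)) h2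

private lemma order_ne_top_global {g : ℂ → ℂ} (hm : ∀ z : ℂ, MeromorphicAt g z)
    {z₀ : ℂ} (h₀ : ¬ ∀ᶠ w in 𝓝[≠] z₀, g w = 0) (z : ℂ) : meromorphicOrderAt g z ≠ ⊤ := by
  set E := {w : ℂ | ∀ᶠ u in 𝓝[≠] w, g u = 0} with hE
  have hopen : IsOpen E := by
    rw [isOpen_iff_mem_nhds]
    intro w hw
    have hw' : ∀ᶠ u in 𝓝 w, u ≠ w → g u = 0 := eventually_nhdsWithin_iff.mp hw
    filter_upwards [hw'.eventually_nhds] with u hu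
    by_cases huw : u = w
    · exact huw ▸ hw
    · rw [hE, Set.mem_setOf_eq, eventually_nhdsWithin_iff]
      filter_upwards [hu, eventually_ne_nhds huw] with v hv hvw _
      exact hv hvw
  have hclosed : IsClosed E := by
    rw [← isOpen_compl_iff, isOpen_iff_mem_nhds]
    intro w hw
    have hne : meromorphicOrderAt g w ≠ ⊤ := fun ht => hw (meromorphicOrderAt_eq_top_iff.mp ht)
    have hev : ∀ᶠ u in 𝓝 w, u ≠ w → g u ≠ 0 :=
      eventually_nhdsWithin_iff.mp (eventually_ne_of_order_ne_top (hm w) hne)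
    filter_upwards [hev.eventually_nhds] with u hu
    intro huE
    have hvw : ∀ᶠ v in 𝓝[≠] u, v ≠ w := by
      by_cases huw : u = w
      · exact huw ▸ self_mem_nhdsWithin
      · exact (eventually_ne_nhds huw).filter_mono nhdsWithin_le_nhds
    have huE' : ∀ᶠ v in 𝓝[≠] u, g v = 0 := huE
    obtain ⟨v, hv0, hvne, hvne0⟩ := ((huE'.and (hvw.and (hu.filter_mono nhdsWithin_le_nhds))).exists)
    exact hvne0 hvne hv0
  rcases isClopen_iff.mp ⟨hclosed, hopen⟩ with hemp | huniv
  · intro ht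
    have : z ∈ E := meromorphicOrderAt_eq_top_iff.mp ht
    simp [hemp] at this
  · exact absurd (huniv ▸ Set.mem_univ z₀ : z₀ ∈ E) h₀

private lemma merOrd_eventually_zero {g : ℂ → ℂ} (hm : ∀ z : ℂ, MeromorphicAt g z)
    (htop : ∀ z : ℂ, meromorphicOrderAt g z ≠ ⊤) (z : ℂ) : ∀ᶠ w in 𝓝[≠] z, merOrd g w = 0 := by
  filter_upwards [(hm z).eventually_analyticAt,
    eventually_ne_of_order_ne_top (hm z) (htop z)] with w ha hne
  have h0 : analyticOrderAt g w = 0 := ha.analyticOrderAt_eq_zero.mpr hne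
  have : meromorphicOrderAt g w = (0 : ℤ) := by
    simp [ha.meromorphicOrderAt_eq, h0]
  rw [merOrd_eq (hm w), this]
  rfl

private lemma support_finite {g : ℂ → ℂ} (hm : ∀ z : ℂ, MeromorphicAt g z)
    (htop : ∀ z : ℂ, meromorphicOrderAt g z ≠ ⊤) (R : ℝ) :
    (Metric.closedBall (0:ℂ) R ∩ Function.support (fun z => ((merOrd g z).toNat : ℝ))).Finite := by
  by_contra hinf
  have hinf' : (Metric.closedBall (0:ℂ) R ∩
      Function.support (fun z => ((merOrd g z).toNat : ℝ))).Infinite := hinf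
  obtain ⟨z, hzK, hacc⟩ := hinf'.exists_accPt_of_subset_isCompact
    (isCompact_closedBall _ _) Set.inter_subset_left
  rw [accPt_iff_frequently] at hacc
  have hev : ∀ᶠ w in 𝓝 z, w ≠ z → merOrd g w = 0 :=
    eventually_nhdsWithin_iff.mp (merOrd_eventually_zero hm htop z)
  obtain ⟨y, ⟨hyne, _, hysup⟩, hy0⟩ := (hacc.and_eventually hev).exists
  apply hysup
  simp [hy0 hyne]

private lemma countZeros_mono {f : ℂ → ℂ} {a : ℂ}
    (hfin : ∀ R : ℝ, (Metric.closedBall (0:ℂ) R ∩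
      Function.support (fun z => ((merOrd (fun s => f s - a) z).toNat : ℝ))).Finite) :
    Monotone (countZeros f a) := by
  intro t t' htt'
  rw [countZeros, countZeros, finsum_mem_eq_sum _ (hfin t), finsum_mem_eq_sum _ (hfin t')]
  apply Finset.sum_le_sum_of_subset_of_nonneg
  · intro z hz
    rw [Set.Finite.mem_toFinset] at *
    exact ⟨Metric.closedBall_subset_closedBall htt' hz.1, hz.2⟩
  · intro z _ _
    positivity

private lemma countZeros_nonneg {f : ℂ → ℂ} {a : ℂ}
    (hfin : ∀ R : ℝ, (Metric.closedBall (0:ℂ) R ∩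
      Function.support (fun z => ((merOrd (fun s => f s - a) z).toNat : ℝ))).Finite) (t : ℝ) :
    0 ≤ countZeros f a t := by
  rw [countZeros, finsum_mem_eq_sum _ (hfin t)]
  positivity

private lemma countZeros_ge {f : ℂ → ℂ} {a : ℂ}
    (hfin : ∀ R : ℝ, (Metric.closedBall (0:ℂ) R ∩
      Function.support (fun z => ((merOrd (fun s => f s - a) z).toNat : ℝ))).Finite)
    (t : ℝ) (W : Finset ℂ)
    (hW : ∀ w ∈ W, w ∈ Metric.closedBall (0:ℂ) t ∧
      1 ≤ ((merOrd (fun s => f s - a) w).toNat : ℝ)) :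
    (W.card : ℝ) ≤ countZeros f a t := by
  rw [countZeros, finsum_mem_eq_sum _ (hfin t)]
  calc (W.card : ℝ) = ∑ _w ∈ W, (1:ℝ) := by simp
  _ ≤ ∑ w ∈ W, ((merOrd (fun s => f s - a) w).toNat : ℝ) :=
      Finset.sum_le_sum (fun w hw => (hW w hw).2)
  _ ≤ _ := by
      apply Finset.sum_le_sum_of_subset_of_nonneg
      · intro w hw
        rw [Set.Finite.mem_toFinset]
        refine ⟨(hW w hw).1, ?_⟩
        have := (hW w hw).2
        intro h0
        have h0' : ((merOrd (fun s => f s - a) w).toNat : ℝ) = 0 := h0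
        rw [h0'] at this
        norm_num at this
      · intro z _ _
        positivity

private lemma countZeros_near_zero {f : ℂ → ℂ} {a : ℂ}
    (hfin : ∀ R : ℝ, (Metric.closedBall (0:ℂ) R ∩
      Function.support (fun z => ((merOrd (fun s => f s - a) z).toNat : ℝ))).Finite)
    (hiso : ∀ᶠ w in 𝓝[≠] (0:ℂ), merOrd (fun s => f s - a) w = 0) :
    ∃ ρ : ℝ, 0 < ρ ∧ ∀ t : ℝ, 0 ≤ t → t < ρ → countZeros f a t = countZeros f a 0 := by
  have h1 : ∀ᶠ w in 𝓝 (0:ℂ), w ≠ 0 → merOrd (fun s => f s - a) w = 0 :=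
    eventually_nhdsWithin_iff.mp hiso
  obtain ⟨ρ, hρpos, hρ⟩ := Metric.eventually_nhds_iff.mp h1
  refine ⟨ρ, hρpos, fun t ht0 htρ => ?_⟩
  rw [countZeros, countZeros, finsum_mem_eq_sum _ (hfin t), finsum_mem_eq_sum _ (hfin 0)]
  congr 1
  apply Finset.Subset.antisymm
  · intro w hw
    rw [Set.Finite.mem_toFinset] at *
    obtain ⟨hw1, hw2⟩ := hw
    have hw0 : w = 0 := by
      by_contra hne
      apply hw2
      have : dist w 0 < ρ := lt_of_le_of_lt (Metric.mem_closedBall.mp hw1) htρ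
      simp [hρ this hne]
    refine ⟨?_, hw2⟩
    rw [hw0]
    exact Metric.mem_closedBall_self le_rfl
  · intro w hw
    rw [Set.Finite.mem_toFinset] at *
    exact ⟨Metric.closedBall_subset_closedBall ht0 hw.1, hw.2⟩

private lemma exists_zero_near {f : ℂ → ℂ} {S : Set ℂ} {a s₀ : ℂ}
    (hSvert : ∀ s ∈ S, ∀ ω : ℝ, s + (ω:ℂ) * Complex.I ∈ S)
    (hana : ∀ z ∈ S, AnalyticAt ℂ f z)
    (hap : UnifAlmostPeriodicOn f S)
    (hs₀ : s₀ ∈ S) (hfs₀ : f s₀ = a)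
    {δ : ℝ} (hδpos : 0 < δ)
    (hball : Metric.closedBall s₀ δ ⊆ S)
    {ε : ℝ} (hεpos : 0 < ε)
    (hsph : ∀ z ∈ Metric.sphere s₀ δ, 2 * ε ≤ ‖f z - a‖) :
    ∃ L : ℝ, 0 < L ∧ ∀ x : ℝ, ∃ ω ∈ Set.Icc x (x + L),
      ∃ w ∈ Metric.closedBall (s₀ + (ω:ℂ) * Complex.I) δ, f w = a := by
  obtain ⟨L, hLpos, hL⟩ := hap ε hεpos
  refine ⟨L, hLpos, fun x => ?_⟩
  obtain ⟨ω, hωmem, hω⟩ := hL x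
  refine ⟨ω, hωmem, ?_⟩
  set zω : ℂ := s₀ + (ω:ℂ) * Complex.I with hzω
  have htrans : ∀ w : ℂ, dist (w - (ω:ℂ) * Complex.I) s₀ = dist w zω := by
    intro w
    rw [dist_eq_norm, dist_eq_norm, hzω]
    congr 1
    ring
  have hcb : Metric.closedBall zω δ ⊆ S := by
    intro w hw
    have h1 : (w - (ω:ℂ) * Complex.I) ∈ Metric.closedBall s₀ δ := by
      rw [Metric.mem_closedBall, htrans]
      exact Metric.mem_closedBall.mp hw
    have := hSvert _ (hball h1) ω
    simpa using this
  by_contra hno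
  push_neg at hno
  set G : ℂ → ℂ := fun w => (f w - a)⁻¹ with hG
  have hGana : ∀ w ∈ Metric.closedBall zω δ, AnalyticAt ℂ G w := fun w hw =>
    ((hana w (hcb hw)).sub analyticAt_const).inv (sub_ne_zero.mpr (hno w hw))
  have hdc : DiffContOnCl ℂ G (Metric.ball zω δ) := by
    constructor
    · exact fun w hw =>
        (hGana w (Metric.ball_subset_closedBall hw)).differentiableAt.differentiableWithinAt
    · rw [closure_ball _ hδpos.ne']
      exact fun w hw => (hGana w hw).continuousAt.continuousWithinAt
  have hfr : ∀ z ∈ frontier (Metric.ball zω δ), ‖G z‖ ≤ ε⁻¹ := by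
    rw [frontier_ball _ hδpos.ne']
    intro z hz
    have hz' : z - (ω:ℂ) * Complex.I ∈ Metric.sphere s₀ δ := by
      rw [Metric.mem_sphere, htrans]
      exact Metric.mem_sphere.mp hz
    have hzS : z - (ω:ℂ) * Complex.I ∈ S := hball (Metric.sphere_subset_closedBall hz')
    have h1 : 2 * ε ≤ ‖f (z - (ω:ℂ) * Complex.I) - a‖ := hsph _ hz'
    have h2 := hω _ hzS
    have h3 : (z - (ω:ℂ) * Complex.I) + (ω:ℂ) * Complex.I = z := by ring
    rw [h3] at h2
    have htri : ‖f (z - (ω:ℂ) * Complex.I) - a‖ ≤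
        ‖f (z - (ω:ℂ) * Complex.I) - f z‖ + ‖f z - a‖ :=
      norm_sub_le_norm_sub_add_norm_sub _ _ _
    have hcomm : ‖f (z - (ω:ℂ) * Complex.I) - f z‖
        = ‖f z - f (z - (ω:ℂ) * Complex.I)‖ := norm_sub_rev _ _
    have h4 : ε ≤ ‖f z - a‖ := by
      rw [hcomm] at htri
      linarith
    have : ‖G z‖ = (‖f z - a‖)⁻¹ := by
      rw [hG]
      simp
    rw [this]
    exact inv_anti₀ hεpos h4
  have hcen : ‖G zω‖ ≤ ε⁻¹ :=
    Complex.norm_le_of_forall_mem_frontier_norm_le Metric.isBounded_ball hdc hfr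
      (subset_closure (Metric.mem_ball_self hδpos))
  have hcne : f zω - a ≠ 0 := sub_ne_zero.mpr
    (hno zω (Metric.mem_closedBall_self hδpos.le))
  have habs : 0 < ‖f zω - a‖ := by
    simpa [norm_pos_iff] using hcne
  have hcen' : (‖f zω - a‖)⁻¹ ≤ ε⁻¹ := by
    have : ‖G zω‖ = (‖f zω - a‖)⁻¹ := by
      rw [hG]; simp
    rwa [this] at hcen
  have h5 : ε ≤ ‖f zω - a‖ := (inv_le_inv₀ habs hεpos).mp hcen'
  have h6 : ‖f zω - a‖ < ε := by
    have := hω s₀ hs₀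
    rwa [hfs₀, ← hzω] at this
  linarith

private lemma one_le_merOrd {f : ℂ → ℂ} {a w : ℂ}
    (hA : AnalyticAt ℂ (fun s => f s - a) w)
    (hw0 : f w = a) (hm : MeromorphicAt (fun s => f s - a) w)
    (htop : meromorphicOrderAt (fun s => f s - a) w ≠ ⊤) : 1 ≤ ((merOrd (fun s => f s - a) w).toNat : ℝ) := by
  have hord : meromorphicOrderAt (fun s => f s - a) w = ENat.map Nat.cast (analyticOrderAt (fun s => f s - a) w) := hA.meromorphicOrderAt_eq
  have hAtop : analyticOrderAt (fun s => f s - a) w ≠ ⊤ := by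
    intro h
    rw [h, ENat.map_top] at hord
    exact htop hord
  obtain ⟨n, hn⟩ := WithTop.ne_top_iff_exists.mp hAtop
  have hn0 : n ≠ 0 := by
    intro h0
    rw [h0] at hn
    exact (hA.analyticOrderAt_eq_zero.mp hn.symm) (by simp [hw0])
  have : meromorphicOrderAt (fun s => f s - a) w = ((n : ℤ) : WithTop ℤ) := by
    rw [hord, ← hn]
    rfl
  rw [merOrd_eq hm, this]
  have h1 : (1:ℕ) ≤ n := Nat.one_le_iff_ne_zero.mpr hn0
  simp only [WithTop.untopD_coe]
  have : (1:ℤ) ≤ (n:ℤ) := by exact_mod_cast h1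
  have h2 : (1:ℕ) ≤ ((n:ℤ)).toNat := by omega
  exact_mod_cast h2

end helpers

open Topology in
/-- If `f` is meromorphic on `ℂ`, analytic, nonconstant and uniformly almost periodic on
a strip `b < Re s < c` (where `b, c` may be `±∞`), and `f = a` has a solution in the
strip, then `N(r,a;f) ≥ c₀ r` for some `c₀ > 0` and all large `r`. -/
theorem stmt14 (f : ℂ → ℂ) (hmer : MeromorphicOn f Set.univ)
    (b c : EReal) (S : Set ℂ) (hS : S = {s : ℂ | b < (s.re : EReal) ∧ (s.re : EReal) < c})
    (hana : ∀ z ∈ S, AnalyticAt ℂ f z)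
    (hnc : ¬ ∃ k : ℂ, ∀ s ∈ S, f s = k)
    (hap : UnifAlmostPeriodicOn f S)
    (a : ℂ) (hsol : ∃ s₀ ∈ S, f s₀ = a) :
    ∃ c₀ : ℝ, 0 < c₀ ∧ ∀ᶠ r in atTop, c₀ * r ≤ Ncount f a r := by
  obtain ⟨s₀, hs₀S, hfs₀⟩ := hsol
  have hgmer : ∀ z : ℂ, MeromorphicAt (fun s => f s - a) z :=
    fun z => (hmer z trivial).sub (MeromorphicAt.const a z)
  -- the strip is open
  have hSopen : IsOpen S := by
    have : S = Complex.re ⁻¹' (Real.toEReal ⁻¹' (Set.Ioo b c)) := by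
      rw [hS]; rfl
    rw [this]
    exact (isOpen_Ioo.preimage continuous_coe_real_ereal).preimage Complex.continuous_re
  -- the strip is preconnected
  have hSpre : IsPreconnected S := by
    have hA : (Real.toEReal ⁻¹' (Set.Ioo b c)).OrdConnected := by
      constructor
      intro x hx y hy z hz
      exact ⟨lt_of_lt_of_le hx.1 (EReal.coe_le_coe_iff.mpr hz.1),
        lt_of_le_of_lt (EReal.coe_le_coe_iff.mpr hz.2) hy.2⟩
    have hAconv : Convex ℝ (Real.toEReal ⁻¹' (Set.Ioo b c)) := hA.convex
    have hSconv : Convex ℝ S := by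
      have : S = Complex.reLm ⁻¹' (Real.toEReal ⁻¹' (Set.Ioo b c)) := by
        rw [hS]; rfl
      rw [this]
      exact hAconv.linear_preimage Complex.reLm
    exact hSconv.isPreconnected
  -- vertical invariance
  have hSvert : ∀ s ∈ S, ∀ ω : ℝ, s + (ω:ℂ) * Complex.I ∈ S := by
    intro s hs ω
    rw [hS] at hs ⊢
    simpa using hs
  -- analyticity of f - a on S
  have hganaS : AnalyticOnNhd ℂ (fun s => f s - a) S :=
    fun z hz => (hana z hz).sub analyticAt_const
  -- f - a is not eventually 0 at points of S
  have hnev : ∀ z ∈ S, ¬ (∀ᶠ w in 𝓝 z, f w - a = 0) := by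
    intro z hz hev
    apply hnc
    refine ⟨a, fun s hsS => ?_⟩
    have heq : Set.EqOn (fun s => f s - a) 0 S :=
      hganaS.eqOn_zero_of_preconnected_of_eventuallyEq_zero hSpre hz
        (hev.mono fun w hw => by simpa using hw)
    have := heq hsS
    simpa [sub_eq_zero] using this
  have hnev' : ¬ (∀ᶠ w in 𝓝[≠] s₀, f w - a = 0) := by
    intro hev
    exact hnev s₀ hs₀S
      ((hganaS s₀ hs₀S).frequently_zero_iff_eventually_zero.mp hev.frequently)
  have htop : ∀ z : ℂ, meromorphicOrderAt (fun s => f s - a) z ≠ ⊤ := order_ne_top_global hgmer hnev'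
  have hfin : ∀ R : ℝ, (Metric.closedBall (0:ℂ) R ∩
      Function.support (fun z => ((merOrd (fun s => f s - a) z).toNat : ℝ))).Finite :=
    support_finite hgmer htop
  have hmono : Monotone (countZeros f a) := countZeros_mono hfin
  -- isolated zero at s₀, choice of δ
  have hgana : AnalyticAt ℂ (fun s => f s - a) s₀ := hganaS s₀ hs₀S
  have hiso : ∀ᶠ w in 𝓝[≠] s₀, f w - a ≠ 0 :=
    hgana.eventually_eq_zero_or_eventually_ne_zero.resolve_left (hnev s₀ hs₀S)
  obtain ⟨δ₁, hδ₁pos, hδ₁⟩ := Metric.isOpen_iff.mp hSopen s₀ hs₀S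
  obtain ⟨δ₂, hδ₂pos, hδ₂⟩ := Metric.eventually_nhds_iff.mp (eventually_nhdsWithin_iff.mp hiso)
  set δ : ℝ := min δ₁ δ₂ / 2 with hδdef
  have hδpos : 0 < δ := by positivity
  have hδlt1 : δ < δ₁ := by
    have := min_le_left δ₁ δ₂
    rw [hδdef]; linarith
  have hδlt2 : δ < δ₂ := by
    have := min_le_right δ₁ δ₂
    rw [hδdef]; linarith
  clear_value δ
  have hballS : Metric.closedBall s₀ δ ⊆ S := fun w hw =>
    hδ₁ (Metric.mem_ball.mpr (lt_of_le_of_lt (Metric.mem_closedBall.mp hw) hδlt1))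
  have hsphne : ∀ z ∈ Metric.sphere s₀ δ, f z - a ≠ 0 := by
    intro z hz
    have hd : dist z s₀ = δ := Metric.mem_sphere.mp hz
    have hzne : z ≠ s₀ := by
      intro h
      rw [h, dist_self] at hd
      exact hδpos.ne hd
    exact hδ₂ (by rw [hd]; exact hδlt2) hzne
  -- minimum of |f - a| on the sphere
  have hcompact := isCompact_sphere s₀ δ
  have hspne : (Metric.sphere s₀ δ).Nonempty := NormedSpace.sphere_nonempty.mpr hδpos.le
  have hcont : ContinuousOn (fun z => ‖f z - a‖) (Metric.sphere s₀ δ) := by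
    intro z hz
    exact (continuous_norm.continuousAt.comp
      (hganaS z (hballS (Metric.sphere_subset_closedBall hz))).continuousAt).continuousWithinAt
  obtain ⟨z₁, hz₁mem, hz₁min⟩ := hcompact.exists_isMinOn hspne hcont
  have hmpos : 0 < ‖f z₁ - a‖ := norm_pos_iff.mpr (hsphne z₁ hz₁mem)
  set ε : ℝ := ‖f z₁ - a‖ / 2 with hεdef
  have hεpos : 0 < ε := by positivity
  clear_value ε
  have hsph2 : ∀ z ∈ Metric.sphere s₀ δ, 2 * ε ≤ ‖f z - a‖ := by
    intro z hz
    have h2 : ‖f z₁ - a‖ ≤ ‖f z - a‖ := hz₁min hz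
    rw [hεdef]
    linarith
  obtain ⟨L, hLpos, hKey⟩ := exists_zero_near hSvert hana hap hs₀S hfs₀ hδpos hballS hεpos hsph2
  -- packing zeros vertically
  set Bq : ℝ := L + 2*δ + 1 with hBq
  have hBqpos : 0 < Bq := by rw [hBq]; linarith
  clear_value Bq
  have hchoice : ∀ k : ℕ, ∃ w : ℂ, f w = a ∧ w ∈ S ∧
      ‖w‖ ≤ ‖s₀‖ + ((k:ℝ)*Bq + L) + δ ∧
      s₀.im + (k:ℝ)*Bq - δ ≤ w.im ∧ w.im ≤ s₀.im + ((k:ℝ)*Bq + L) + δ := by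
    intro k
    obtain ⟨ω, hωmem, w, hwball, hwa⟩ := hKey ((k:ℝ)*Bq)
    have hωlb : (k:ℝ)*Bq ≤ ω := hωmem.1
    have hωub : ω ≤ (k:ℝ)*Bq + L := hωmem.2
    have hω0 : 0 ≤ ω := le_trans (by positivity) hωlb
    have hwdist : dist w (s₀ + (ω:ℂ)*Complex.I) ≤ δ := Metric.mem_closedBall.mp hwball
    have htrans : dist (w - (ω:ℂ)*Complex.I) s₀ = dist w (s₀ + (ω:ℂ)*Complex.I) := by
      rw [dist_eq_norm, dist_eq_norm]
      congr 1
      ring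
    refine ⟨w, hwa, ?_, ?_, ?_, ?_⟩
    · have h1 : (w - (ω:ℂ)*Complex.I) ∈ Metric.closedBall s₀ δ := by
        rw [Metric.mem_closedBall, htrans]
        exact hwdist
      have := hSvert _ (hballS h1) ω
      simpa using this
    · have h2 : ‖w‖ - ‖s₀ + (ω:ℂ)*Complex.I‖ ≤
          ‖w - (s₀ + (ω:ℂ)*Complex.I)‖ := by
        have := norm_sub_norm_le w (s₀ + (ω:ℂ)*Complex.I)
        simpa using this
      have h3 : ‖w - (s₀ + (ω:ℂ)*Complex.I)‖ ≤ δ := by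
        rw [← Complex.dist_eq]
        exact hwdist
      have h4 : ‖s₀ + (ω:ℂ)*Complex.I‖ ≤ ‖s₀‖ + ω := by
        refine le_trans (norm_add_le _ _) ?_
        have : ‖(ω:ℂ)*Complex.I‖ = |ω| := by
          simp [map_mul]
        rw [this, _root_.abs_of_nonneg hω0]
      linarith
    · have h5 : |w.im - (s₀ + (ω:ℂ)*Complex.I).im| ≤ δ := by
        have h6 := Complex.abs_im_le_norm (w - (s₀ + (ω:ℂ)*Complex.I))
        rw [Complex.sub_im] at h6
        have h7 : ‖w - (s₀ + (ω:ℂ)*Complex.I)‖ ≤ δ := by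
          rw [← Complex.dist_eq]; exact hwdist
        linarith
      have h8 : (s₀ + (ω:ℂ)*Complex.I).im = s₀.im + ω := by simp
      rw [h8] at h5
      have := (abs_le.mp h5).1
      linarith
    · have h5 : |w.im - (s₀ + (ω:ℂ)*Complex.I).im| ≤ δ := by
        have h6 := Complex.abs_im_le_norm (w - (s₀ + (ω:ℂ)*Complex.I))
        rw [Complex.sub_im] at h6
        have h7 : ‖w - (s₀ + (ω:ℂ)*Complex.I)‖ ≤ δ := by
          rw [← Complex.dist_eq]; exact hwdist
        linarith
      have h8 : (s₀ + (ω:ℂ)*Complex.I).im = s₀.im + ω := by simp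
      rw [h8] at h5
      have := (abs_le.mp h5).2
      linarith
  choose w hwa hwS habs him1 him2 using hchoice
  have hlt : ∀ i j : ℕ, i < j → (w i).im < (w j).im := by
    intro i j hij
    have hij' : ((i:ℝ)+1) ≤ (j:ℝ) := by exact_mod_cast hij
    have hmul : ((i:ℝ)+1)*Bq ≤ (j:ℝ)*Bq := mul_le_mul_of_nonneg_right hij' hBqpos.le
    have h1 := him2 i
    have h2 := him1 j
    have h3 : Bq = L + 2*δ + 1 := hBq
    linarith
  have hwinj : Function.Injective w := by
    intro i j h
    rcases lt_trichotomy i j with hc|hc|hc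
    · have := hlt i j hc; rw [h] at this; exact absurd this (lt_irrefl _)
    · exact hc
    · have := hlt j i hc; rw [h] at this; exact absurd this (lt_irrefl _)
  set A : ℝ := ‖s₀‖ + L + δ + 1 with hA
  have hApos : 0 < A := by positivity
  clear_value A
  have habs' : ∀ k : ℕ, ‖w k‖ ≤ A + (k:ℝ)*Bq := by
    intro k
    have := habs k
    rw [hA]
    linarith
  have hcount : ∀ r : ℝ, A ≤ r → (r - A)/Bq ≤ countZeros f a r := by
    intro r hr
    set N := ⌊(r - A)/Bq⌋₊ with hN
    have hfl : 0 ≤ (r - A)/Bq := div_nonneg (by linarith) hBqpos.le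
    have hNle : (N:ℝ)*Bq ≤ r - A := by
      have h1 : (N:ℝ) ≤ (r-A)/Bq := Nat.floor_le hfl
      calc (N:ℝ)*Bq ≤ ((r-A)/Bq)*Bq := mul_le_mul_of_nonneg_right h1 hBqpos.le
        _ = r - A := div_mul_cancel₀ _ hBqpos.ne'
    have hmem : ∀ u ∈ (Finset.range (N+1)).image w, u ∈ Metric.closedBall (0:ℂ) r ∧
        1 ≤ ((merOrd (fun s => f s - a) u).toNat : ℝ) := by
      intro u hu
      rw [Finset.mem_image] at hu
      obtain ⟨k, hk, rfl⟩ := hu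
      rw [Finset.mem_range] at hk
      have hk' : (k:ℝ) ≤ (N:ℝ) := by exact_mod_cast Nat.lt_succ_iff.mp hk
      constructor
      · rw [Metric.mem_closedBall, Complex.dist_eq, sub_zero]
        have hm1 : (k:ℝ)*Bq ≤ (N:ℝ)*Bq := mul_le_mul_of_nonneg_right hk' hBqpos.le
        have := habs' k
        linarith
      · exact one_le_merOrd (hganaS _ (hwS k)) (hwa k) (hgmer _) (htop _)
    have hle := countZeros_ge hfin r ((Finset.range (N+1)).image w) hmem
    have hcard : ((Finset.range (N+1)).image w).card = N + 1 := by
      rw [Finset.card_image_of_injective _ hwinj, Finset.card_range]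
    rw [hcard] at hle
    have hlt2 : (r - A)/Bq < (N:ℝ) + 1 := Nat.lt_floor_add_one _
    have : ((N+1 : ℕ):ℝ) = (N:ℝ) + 1 := by push_cast; ring
    rw [this] at hle
    linarith
  -- integrability machinery
  obtain ⟨ρ, hρpos, hρ⟩ := countZeros_near_zero hfin (merOrd_eventually_zero hgmer htop 0)
  have hn0nonneg : 0 ≤ countZeros f a 0 := countZeros_nonneg hfin 0
  set h : ℝ → ℝ := fun t => (countZeros f a t - countZeros f a 0)/t with hhdef
  have hmeas : Measurable h := (hmono.measurable.sub measurable_const).div measurable_id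
  have hh0 : ∀ t : ℝ, 0 ≤ t → 0 ≤ h t := by
    intro t ht
    rcases eq_or_lt_of_le ht with h1|h1
    · rw [hhdef]; simp [← h1]
    · exact div_nonneg (sub_nonneg.mpr (hmono ht)) ht
  have hzero : ∀ t : ℝ, 0 ≤ t → t < ρ → h t = 0 := by
    intro t ht1 ht2
    rw [hhdef]
    simp [hρ t ht1 ht2]
  have hint : ∀ r : ℝ, 0 ≤ r → IntervalIntegrable h MeasureTheory.volume 0 r := by
    intro r hr
    rw [intervalIntegrable_iff, Set.uIoc_of_le hr]
    apply MeasureTheory.Integrable.mono'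
      (g := fun _ => (countZeros f a r - countZeros f a 0)/ρ)
    · exact (MeasureTheory.integrableOn_const_iff).mpr (Or.inr measure_Ioc_lt_top)
    · exact hmeas.aestronglyMeasurable
    · refine (MeasureTheory.ae_restrict_iff' measurableSet_Ioc).mpr
        (Filter.Eventually.of_forall fun t ht => ?_)
      obtain ⟨ht0, htr⟩ := ht
      rw [Real.norm_eq_abs, _root_.abs_of_nonneg (hh0 t ht0.le)]
      by_cases hcase : t < ρ
      · rw [hzero t ht0.le hcase]
        exact div_nonneg (sub_nonneg.mpr (hmono hr)) hρpos.le
      · push_neg at hcase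
        rw [hhdef]
        exact div_le_div₀ (sub_nonneg.mpr (hmono hr))
          (sub_le_sub_right (hmono htr) _) hρpos hcase
  -- conclusion
  refine ⟨1/(16*Bq), by positivity, ?_⟩
  rw [Filter.eventually_atTop]
  refine ⟨max (max (4*A) 2) (8*Bq*(countZeros f a 0 + 1)), fun r hr => ?_⟩
  have hr4A : 4*A ≤ r := le_trans (le_trans (le_max_left _ _) (le_max_left _ _)) hr
  have hr2 : (2:ℝ) ≤ r := le_trans (le_trans (le_max_right _ _) (le_max_left _ _)) hr
  have hr8 : 8*Bq*(countZeros f a 0 + 1) ≤ r := le_trans (le_max_right _ _) hr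
  have hrpos : (0:ℝ) < r := lt_of_lt_of_le (by norm_num) hr2
  have hint1 : IntervalIntegrable h MeasureTheory.volume 0 (r/2) := hint (r/2) (by linarith)
  have hint2 : IntervalIntegrable h MeasureTheory.volume (r/2) r := by
    apply (hint r hrpos.le).mono_set
    rw [Set.uIcc_of_le (by linarith : r/2 ≤ r), Set.uIcc_of_le hrpos.le]
    exact Set.Icc_subset_Icc (by linarith) le_rfl
  have hsplit : (∫ t in (0:ℝ)..r, h t)
      = (∫ t in (0:ℝ)..(r/2), h t) + ∫ t in (r/2)..r, h t :=
    (intervalIntegral.integral_add_adjacent_intervals hint1 hint2).symm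
  have hI1 : 0 ≤ ∫ t in (0:ℝ)..(r/2), h t :=
    intervalIntegral.integral_nonneg (by linarith) (fun u hu => hh0 u hu.1)
  have hI2 : (countZeros f a (r/2) - countZeros f a 0)/r * (r/2) ≤ ∫ t in (r/2)..r, h t := by
    have hconst : (∫ _t in (r/2)..r, (countZeros f a (r/2) - countZeros f a 0)/r)
        = (r - r/2) * ((countZeros f a (r/2) - countZeros f a 0)/r) := by
      rw [intervalIntegral.integral_const]
      simp [smul_eq_mul]
    have hbd : ∀ t ∈ Set.Icc (r/2) r,
        (countZeros f a (r/2) - countZeros f a 0)/r ≤ h t := by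
      intro t ht
      obtain ⟨ht1, ht2⟩ := ht
      have htpos : 0 < t := lt_of_lt_of_le (by linarith) ht1
      rw [hhdef]
      exact div_le_div₀ (sub_nonneg.mpr (hmono htpos.le))
        (sub_le_sub_right (hmono ht1) _) htpos ht2
    have hmono2 := intervalIntegral.integral_mono_on (by linarith : r/2 ≤ r)
      (intervalIntegrable_const (c := (countZeros f a (r/2) - countZeros f a 0)/r)) hint2 hbd
    calc (countZeros f a (r/2) - countZeros f a 0)/r * (r/2)
        = (r - r/2) * ((countZeros f a (r/2) - countZeros f a 0)/r) := by ring
      _ = ∫ _t in (r/2)..r, (countZeros f a (r/2) - countZeros f a 0)/r := hconst.symm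
      _ ≤ _ := hmono2
  have hn2 : (r/2 - A)/Bq ≤ countZeros f a (r/2) := hcount (r/2) (by linarith)
  have h64 : r/(4*Bq) ≤ countZeros f a (r/2) := by
    have h1 : r/4 ≤ r/2 - A := by linarith
    have h2 : r/(4*Bq) = (r/4)/Bq := by ring
    rw [h2]
    exact le_trans ((div_le_div_iff_of_pos_right hBqpos).mpr h1) hn2
  have hNc : Ncount f a r = (∫ t in (0:ℝ)..r, h t) + countZeros f a 0 * Real.log r := rfl
  have hlog : 0 ≤ countZeros f a 0 * Real.log r :=
    mul_nonneg hn0nonneg (Real.log_nonneg (by linarith))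
  have hKr : (countZeros f a (r/2) - countZeros f a 0)/r * (r/2)
      = (countZeros f a (r/2) - countZeros f a 0)/2 := by
    field_simp
  have hquot : countZeros f a 0 + 1 ≤ r/(8*Bq) := by
    rw [le_div_iff₀ (by positivity : (0:ℝ) < 8*Bq)]
    linarith
  have hsum : r/(4*Bq) = r/(8*Bq) + r/(8*Bq) := by ring
  have hfinal : 1/(16*Bq)*r = r/(8*Bq)/2 := by ring
  rw [hNc, hsplit]
  linarith
end

section
/- Let f be analytic and uniformly almost periodic in the sense of Bohr in a half-plane Re(s) > b, and suppose f(s) tends to a nonzero finite limit A₀ as Re(s) → +∞. Then for any τ > 0 the function Λf(s) = f(s + τ)/f(s) is uniformly almost periodic in the sense of Bohr in some right half-plane Re(s) > b′. -/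
open Complex Filter

/-- If `f` is analytic and uniformly almost periodic in a half-plane `Re s > b` and tends
to a nonzero finite limit `A₀` as `Re s → +∞`, then for any `τ > 0` the quotient
`Λf(s) = f(s + τ)/f(s)` is uniformly almost periodic in some right half-plane. -/
theorem stmt16 (f : ℂ → ℂ) (b : ℝ)
    (hana : ∀ z : ℂ, b < z.re → AnalyticAt ℂ f z)
    (hap : UnifAlmostPeriodicOn f {s : ℂ | b < s.re})
    (A₀ : ℂ) (hA₀ : A₀ ≠ 0)
    (hlim : Tendsto f (comap Complex.re atTop) (nhds A₀))
    (τ : ℝ) (hτ : 0 < τ) :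
    ∃ b' : ℝ, UnifAlmostPeriodicOn (fun s => f (s + (τ : ℂ)) / f s) {s : ℂ | b' < s.re} := by
  set c := ‖A₀‖ with hc
  have hc0 : 0 < c := norm_pos_iff.mpr hA₀
  have h1 : ∀ᶠ s in comap Complex.re atTop, ‖f s - A₀‖ < c / 2 := by
    have := Metric.tendsto_nhds.mp hlim (c / 2) (by positivity)
    filter_upwards [this] with s hs
    simpa [Complex.dist_eq] using hs
  rw [eventually_comap, eventually_atTop] at h1
  obtain ⟨B, hB⟩ := h1
  have key : ∀ z : ℂ, B ≤ z.re →
      c / 2 < ‖f z‖ ∧ ‖f z‖ < 3 * c / 2 := by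
    intro z hz
    have h := hB z.re hz z rfl
    have t1 : ‖A₀‖ ≤ ‖A₀ - f z‖ + ‖f z‖ := by
      simpa using norm_add_le (A₀ - f z) (f z)
    have t2 : ‖A₀ - f z‖ = ‖f z - A₀‖ := norm_sub_rev _ _
    have t3 : ‖f z‖ ≤ ‖f z - A₀‖ + ‖A₀‖ := by
      simpa using norm_add_le (f z - A₀) A₀
    constructor <;> [linarith; linarith]
  refine ⟨max b B, ?_⟩
  intro ε hε
  obtain ⟨L, hL, hω⟩ := hap (ε * c / 13) (by positivity)
  refine ⟨L, hL, fun x => ?_⟩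
  obtain ⟨ω, hωmem, hωprop⟩ := hω x
  refine ⟨ω, hωmem, ?_⟩
  intro s hs
  have hs' : max b B < s.re := hs
  have hsb : b < s.re := lt_of_le_of_lt (le_max_left _ _) hs'
  have hsB : B ≤ s.re := le_of_lt (lt_of_le_of_lt (le_max_right _ _) hs')
  have hreI : ((ω : ℂ) * Complex.I).re = 0 := by simp
  have hreτ : ((τ : ℂ)).re = τ := by simp
  have h1 : ‖f (s + (ω : ℂ) * Complex.I) - f s‖ < ε * c / 13 := hωprop s hsb
  have h2 : ‖f (s + (τ : ℂ) + (ω : ℂ) * Complex.I) - f (s + (τ : ℂ))‖ <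
      ε * c / 13 := by
    refine hωprop (s + (τ : ℂ)) ?_
    simp only [Set.mem_setOf_eq, Complex.add_re, hreτ]
    linarith
  have k1 := key s hsB
  have k2 := key (s + (τ : ℂ)) (by simp only [Complex.add_re, hreτ]; linarith)
  have k3 := key (s + (ω : ℂ) * Complex.I) (by simp only [Complex.add_re, hreI]; linarith)
  have hD : f s ≠ 0 := by
    intro h; rw [h] at k1; simp at k1; linarith [k1.1]
  have hB' : f (s + (ω : ℂ) * Complex.I) ≠ 0 := by
    intro h; rw [h] at k3; simp at k3; linarith [k3.1]
  set A := f (s + (τ : ℂ) + (ω : ℂ) * Complex.I) with hA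
  set B2 := f (s + (ω : ℂ) * Complex.I) with hB2
  set C := f (s + (τ : ℂ)) with hC
  set D := f s with hD2
  have e : s + (ω : ℂ) * Complex.I + (τ : ℂ) = s + (τ : ℂ) + (ω : ℂ) * Complex.I := by ring
  show ‖f (s + (ω : ℂ) * Complex.I + (τ : ℂ)) / B2 - C / D‖ < ε
  rw [e]
  rw [div_sub_div _ _ hB' hD, norm_div, norm_mul,
    div_lt_iff₀ (mul_pos (norm_pos_iff.mpr hB') (norm_pos_iff.mpr hD))]
  rw [show f (s + (τ : ℂ) + (ω : ℂ) * Complex.I) = A from rfl]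
  have num : ‖A * D - B2 * C‖ ≤
      ‖A - C‖ * ‖D‖ + ‖C‖ * ‖D - B2‖ := by
    calc ‖A * D - B2 * C‖
        = ‖(A - C) * D + C * (D - B2)‖ := by ring_nf
      _ ≤ ‖(A - C) * D‖ + ‖C * (D - B2)‖ := norm_add_le _ _
      _ = _ := by rw [norm_mul, norm_mul]
  have hDB : ‖D - B2‖ = ‖B2 - D‖ := norm_sub_rev _ _
  have hAC : ‖A - C‖ < ε * c / 13 := h2
  have hBD : ‖B2 - D‖ < ε * c / 13 := h1
  rw [hDB] at num
  nlinarith [num, hAC, hBD, k1.1, k1.2, k2.1, k2.2, k3.1, k3.2,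
    norm_nonneg (A - C), norm_nonneg (B2 - D), norm_nonneg C,
    norm_nonneg D, hε, hc0, mul_pos hε hc0,
    mul_pos (sub_pos.mpr k3.1) (sub_pos.mpr k1.1)]
end
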